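/- arXiv:2304.09815 — 10 statements merged into one kernel-verified Lean document; each statement's English description precedes it below -/
import Mathlib

section
/- Fix 0 < a < 1 and define the two-variable real polynomials P_n by P_1(X,Y) = 1 and P_{n+1}(X,Y) = P_n(X,Y)·((a−3na)·X + (a²−n−2na²)·Y) + (∂P_n/∂X)(X,Y)·(a²·X·Y + a·Y²) + (∂P_n/∂Y)(X,Y)·(a·X·Y + a²·X²). Let U ⊆ ℝ be an open interval and g : U → ℝ a continuous function such that sinh(a·g(x))·e^{g(x)} = x and g(x) ≠ M_a for every x ∈ U. Then for every n ≥ 1, g is n times differentiable on U and its n-th derivative satisfies g⁽ⁿ⁾(x) = P_n(cosh(a·g(x)), sinh(a·g(x)))·e^{−n·g(x)} / (a·cosh(a·g(x)) + sinh(a·g(x)))^{2n−1} for all x ∈ U. -/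
/-- `f(a,w) = sinh(a·w)·e^w`. -/
noncomputable def fab (a w : ℝ) : ℝ := Real.sinh (a * w) * Real.exp w

/-- `M_a = (1/(2a))·log((1−a)/(1+a))`, the branch point of `f(a,·)`. -/
noncomputable def Ma (a : ℝ) : ℝ := (1 / (2 * a)) * Real.log ((1 - a) / (1 + a))

/-- The polynomials `P_n` of the recurrence, with the index shifted:
`Ppoly a n` is the polynomial `P_{n+1}`, so `Ppoly a 0 = P_1 = 1`. -/
noncomputable def Ppoly (a : ℝ) : ℕ → MvPolynomial (Fin 2) ℝ
  | 0 => 1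
  | n + 1 =>
      Ppoly a n *
          (MvPolynomial.C (a - 3 * ((n : ℝ) + 1) * a) * MvPolynomial.X 0 +
            MvPolynomial.C (a ^ 2 - ((n : ℝ) + 1) - 2 * ((n : ℝ) + 1) * a ^ 2) *
              MvPolynomial.X 1) +
        MvPolynomial.pderiv (0 : Fin 2) (Ppoly a n) *
          (MvPolynomial.C (a ^ 2) * MvPolynomial.X 0 * MvPolynomial.X 1 +
            MvPolynomial.C a * MvPolynomial.X 1 ^ 2) +
        MvPolynomial.pderiv (1 : Fin 2) (Ppoly a n) *
          (MvPolynomial.C a * MvPolynomial.X 0 * MvPolynomial.X 1 +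
            MvPolynomial.C (a ^ 2) * MvPolynomial.X 0 ^ 2)

lemma Dne {a w : ℝ} (ha0 : 0 < a) (ha1 : a < 1) (hw : w ≠ Ma a) :
    a * Real.cosh (a * w) + Real.sinh (a * w) ≠ 0 := by
  intro h
  apply hw
  rw [Real.cosh_eq, Real.sinh_eq] at h
  have h2 : (1 + a) * Real.exp (a * w) = (1 - a) * Real.exp (-(a * w)) := by ring_nf at h ⊢; linarith
  have hmul : Real.exp (a * w) * Real.exp (-(a * w)) = 1 := by
    rw [← Real.exp_add]; simp
  have he : Real.exp (2 * (a * w)) = (1 - a) / (1 + a) := by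
    rw [two_mul, Real.exp_add, eq_div_iff (by positivity)]
    nlinarith [Real.exp_pos (a*w), hmul]
  have := congrArg Real.log he
  rw [Real.log_exp] at this
  rw [Ma, ← this]
  field_simp


open MvPolynomial in
lemma mv_hasDerivAt (P : MvPolynomial (Fin 2) ℝ) {c0 c1 : ℝ → ℝ} {x d0 d1 : ℝ}
    (h0 : HasDerivAt c0 d0 x) (h1 : HasDerivAt c1 d1 x) :
    HasDerivAt (fun y => MvPolynomial.eval ![c0 y, c1 y] P)
      (MvPolynomial.eval ![c0 x, c1 x] (pderiv 0 P) * d0 +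
       MvPolynomial.eval ![c0 x, c1 x] (pderiv 1 P) * d1) x := by
  induction P using MvPolynomial.induction_on with
  | C r => simpa using hasDerivAt_const x r
  | add p q hp hq =>
      convert (show HasDerivAt (_ : ℝ → ℝ) _ x from hp.fun_add hq) using 1 <;> simp <;> ring
  | mul_X p i hp =>
      fin_cases i
      · have : HasDerivAt (_ : ℝ → ℝ) _ x := hp.mul h0
        convert this using 1
        · ext y; simp
        · simp [pderiv_mul]; ring
      · have : HasDerivAt (_ : ℝ → ℝ) _ x := hp.mul h1
        convert this using 1
        · ext y; simp
        · simp [pderiv_mul]; ring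

noncomputable def phi (a : ℝ) (g : ℝ → ℝ) (n : ℕ) (x : ℝ) : ℝ :=
  MvPolynomial.eval ![Real.cosh (a * g x), Real.sinh (a * g x)] (Ppoly a n) *
    Real.exp (-((n : ℝ) + 1) * g x) /
    (a * Real.cosh (a * g x) + Real.sinh (a * g x)) ^ (2 * n + 1)

lemma phi_hasDerivAt (a : ℝ) (g : ℝ → ℝ) (n : ℕ) (x : ℝ)
    (hd : a * Real.cosh (a * g x) + Real.sinh (a * g x) ≠ 0)
    (hg : HasDerivAt g (((a * Real.cosh (a * g x) + Real.sinh (a * g x)) * Real.exp (g x))⁻¹) x) :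
    HasDerivAt (phi a g n) (phi a g (n + 1) x) x := by
  set g' := ((a * Real.cosh (a * g x) + Real.sinh (a * g x)) * Real.exp (g x))⁻¹ with hg'def
  have hC : HasDerivAt (fun y => Real.cosh (a * g y)) (Real.sinh (a * g x) * (a * g')) x := by
    simpa [Function.comp_def] using (Real.hasDerivAt_cosh (a * g x)).comp x (hg.const_mul a)
  have hS : HasDerivAt (fun y => Real.sinh (a * g y)) (Real.cosh (a * g x) * (a * g')) x := by
    simpa [Function.comp_def] using (Real.hasDerivAt_sinh (a * g x)).comp x (hg.const_mul a)
  have hQ := mv_hasDerivAt (Ppoly a n) hC hS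
  have hE : HasDerivAt (fun y => Real.exp (-((n : ℝ) + 1) * g y))
      (Real.exp (-((n : ℝ) + 1) * g x) * (-((n : ℝ) + 1) * g')) x := by
    simpa [Function.comp_def] using
      (Real.hasDerivAt_exp (-((n : ℝ) + 1) * g x)).comp x (hg.const_mul (-((n : ℝ) + 1)))
  have hDc : HasDerivAt (fun y => a * Real.cosh (a * g y) + Real.sinh (a * g y))
      (a * (Real.sinh (a * g x) * (a * g')) + Real.cosh (a * g x) * (a * g')) x :=
    (hC.const_mul a).add hS
  have hP := hDc.fun_pow (2 * n + 1)
  have hPne : (a * Real.cosh (a * g x) + Real.sinh (a * g x)) ^ (2 * n + 1) ≠ 0 :=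
    pow_ne_zero _ hd
  have hFull : HasDerivAt (_ : ℝ → ℝ) _ x := (hQ.fun_mul hE).fun_mul (hP.fun_inv hPne)
  have hfun : (phi a g n) = fun y =>
      (MvPolynomial.eval ![Real.cosh (a * g y), Real.sinh (a * g y)] (Ppoly a n) *
        Real.exp (-((n : ℝ) + 1) * g y)) *
      (((a * Real.cosh (a * g y) + Real.sinh (a * g y)) ^ (2 * n + 1))⁻¹) := by
    funext y; simp [phi, div_eq_mul_inv]
  rw [hfun]
  convert hFull using 1
  have he : Real.exp (g x) ≠ 0 := Real.exp_ne_zero _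
  have hee : Real.exp (-((n : ℝ) + 1 + 1) * g x) =
      Real.exp (-((n : ℝ) + 1) * g x) * (Real.exp (g x))⁻¹ := by
    rw [← Real.exp_neg, ← Real.exp_add]; ring_nf
  simp only [phi, Ppoly, map_add, map_mul, map_pow, MvPolynomial.eval_C, MvPolynomial.eval_X,
    Matrix.cons_val_zero, Matrix.cons_val_one, Matrix.head_cons]
  push_cast
  rw [hee, hg'def]
  rw [show 2 * (n + 1) + 1 = 2 * n + 1 + 2 from by ring, pow_add,
    show 2 * n + 1 = 2 * n + 1 from rfl]
  simp only [Nat.add_sub_cancel, pow_succ]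
  set c := Real.cosh (a * g x)
  set s := Real.sinh (a * g x)
  set e := Real.exp (g x)
  set d := a * c + s
  set t := d ^ (2 * n) with ht
  have htne : t ≠ 0 := pow_ne_zero _ hd
  field_simp
  ring

/-- Any continuous inverse branch `g` of `f(a,·)` on an open interval avoiding the
branch point `M_a` is `n` times differentiable, with `n`-th derivative given by
`P_n(cosh(a g x), sinh(a g x))·e^{−n g x}/(a cosh(a g x)+sinh(a g x))^{2n−1}`. -/
theorem stmt_1 (a p q : ℝ) (ha0 : 0 < a) (ha1 : a < 1) (g : ℝ → ℝ)
    (hg : ContinuousOn g (Set.Ioo p q))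
    (hinv : ∀ x ∈ Set.Ioo p q, Real.sinh (a * g x) * Real.exp (g x) = x)
    (hM : ∀ x ∈ Set.Ioo p q, g x ≠ Ma a) :
    ∀ n : ℕ, 1 ≤ n →
      ContDiffOn ℝ n g (Set.Ioo p q) ∧
      ∀ x ∈ Set.Ioo p q,
        iteratedDerivWithin n g (Set.Ioo p q) x =
          MvPolynomial.eval ![Real.cosh (a * g x), Real.sinh (a * g x)] (Ppoly a (n - 1)) *
              Real.exp (-(n : ℝ) * g x) /
            (a * Real.cosh (a * g x) + Real.sinh (a * g x)) ^ (2 * n - 1) := by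
  set U := Set.Ioo p q with hUdef
  have hUo : IsOpen U := isOpen_Ioo
  have hD : ∀ x ∈ U, a * Real.cosh (a * g x) + Real.sinh (a * g x) ≠ 0 :=
    fun x hx => Dne ha0 ha1 (hM x hx)
  -- derivative of g
  have hg' : ∀ x ∈ U, HasDerivAt g
      (((a * Real.cosh (a * g x) + Real.sinh (a * g x)) * Real.exp (g x))⁻¹) x := by
    intro x hx
    have hcont : ContinuousAt g x := hg.continuousAt (hUo.mem_nhds hx)
    have hf : HasDerivAt (fun w => Real.sinh (a * w) * Real.exp w)
        ((a * Real.cosh (a * g x) + Real.sinh (a * g x)) * Real.exp (g x)) (g x) := by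
      have h1 : HasDerivAt (fun w => Real.sinh (a * w)) (a * Real.cosh (a * g x)) (g x) := by
        simpa [Function.comp_def, mul_comm] using
          (Real.hasDerivAt_sinh (a * g x)).comp (g x) ((hasDerivAt_id (g x)).const_mul a)
      have : HasDerivAt (_ : ℝ → ℝ) _ (g x) := h1.fun_mul (Real.hasDerivAt_exp (g x))
      convert this using 1
      ring
    have hne : (a * Real.cosh (a * g x) + Real.sinh (a * g x)) * Real.exp (g x) ≠ 0 :=
      mul_ne_zero (hD x hx) (Real.exp_ne_zero _)
    exact HasDerivAt.of_local_left_inverse hcont hf hne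
      (Filter.eventually_of_mem (hUo.mem_nhds hx) (fun y hy => hinv y hy))
  -- smoothness of g
  have hsmooth : ∀ m : ℕ, ContDiffOn ℝ m g U := by
    intro m
    induction m with
    | zero => simpa using hg
    | succ k ih =>
      rw [show ((k + 1 : ℕ) : WithTop ℕ∞) = (k : WithTop ℕ∞) + 1 by push_cast; rfl,
        contDiffOn_succ_iff_deriv_of_isOpen hUo]
      refine ⟨fun x hx => (hg' x hx).differentiableAt.differentiableWithinAt, by simp, ?_⟩
      have hφ : ContDiffOn ℝ k
          (fun x => ((a * Real.cosh (a * g x) + Real.sinh (a * g x)) * Real.exp (g x))⁻¹) U := by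
        refine ContDiffOn.inv ?_ (fun x hx => mul_ne_zero (hD x hx) (Real.exp_ne_zero _))
        have hag : ContDiffOn ℝ k (fun x => a * g x) U := contDiffOn_const.mul ih
        exact ((contDiffOn_const.mul (Real.contDiff_cosh.comp_contDiffOn hag)).add
          (Real.contDiff_sinh.comp_contDiffOn hag)).mul
          (Real.contDiff_exp.comp_contDiffOn ih)
      exact hφ.congr (fun x hx => (hg' x hx).deriv)
  -- iterated derivative formula
  have hiter : ∀ m : ℕ, ∀ x ∈ U, iteratedDerivWithin (m + 1) g U x = phi a g m x := by
    intro m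
    induction m with
    | zero =>
      intro x hx
      rw [iteratedDerivWithin_one, derivWithin_of_isOpen hUo hx,
        (hg' x hx).deriv]
      simp only [phi, Ppoly, map_one, one_mul]
      rw [mul_inv, ← Real.exp_neg]
      norm_num
      rw [div_eq_mul_inv, mul_comm]
    | succ k ih =>
      intro x hx
      rw [iteratedDerivWithin_succ, derivWithin_of_isOpen hUo hx]
      have heq : deriv (iteratedDerivWithin (k + 1) g U) x = deriv (phi a g k) x :=
        Filter.EventuallyEq.deriv_eq
          (Filter.eventually_of_mem (hUo.mem_nhds hx) ih)
      rw [heq, (phi_hasDerivAt a g k x (hD x hx) (hg' x hx)).deriv]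
  intro n hn
  obtain ⟨m, rfl⟩ : ∃ m, n = m + 1 := ⟨n - 1, by omega⟩
  refine ⟨hsmooth (m + 1), fun x hx => ?_⟩
  rw [hiter m x hx]
  simp only [phi, Nat.add_sub_cancel]
  rw [show 2 * (m + 1) - 1 = 2 * m + 1 from by omega]
  push_cast
  ring_nf
end

section
/- Fix 0 < a < 1. Let U ⊆ ℝ be an open interval with 0 ∉ U, and let g : U → ℝ be a continuous function such that sinh(a·g(x))·e^{g(x)} = x and g(x) ≠ M_a for every x ∈ U. Then the function Ψ(x) = x·g(x) − x/(1−a²) + (a·x/(1−a²))·coth(a·g(x)) is differentiable on U with Ψ′(x) = g(x) for all x ∈ U; that is, Ψ is a primitive function of the branch g. -/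
set_option maxHeartbeats 1000000 in
/-- For a continuous inverse branch `g` of `w ↦ sinh(a·w)·e^w` on an open interval
not containing `0` and avoiding the branch point `M_a`, the function
`Ψ(x) = x·g(x) − x/(1−a²) + (a·x/(1−a²))·coth(a·g(x))` is a primitive of `g`. -/
theorem stmt_2 (a p q : ℝ) (ha0 : 0 < a) (ha1 : a < 1)
    (h0 : (0 : ℝ) ∉ Set.Ioo p q) (g : ℝ → ℝ)
    (hg : ContinuousOn g (Set.Ioo p q))
    (hinv : ∀ x ∈ Set.Ioo p q, Real.sinh (a * g x) * Real.exp (g x) = x)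
    (hM : ∀ x ∈ Set.Ioo p q, g x ≠ Ma a) :
    ∀ x ∈ Set.Ioo p q,
      HasDerivAt (fun t => t * g t - t / (1 - a ^ 2) +
          (a * t / (1 - a ^ 2)) * (Real.cosh (a * g t) / Real.sinh (a * g t)))
        (g x) x := by
  intro x hx
  have hxne : x ≠ 0 := fun h => h0 (h ▸ hx)
  have ha2 : (1 : ℝ) - a ^ 2 ≠ 0 := by nlinarith
  set w := g x with hw
  set s := Real.sinh (a * w) with hsdef
  set c := Real.cosh (a * w) with hcdef
  set E := Real.exp w with hEdef
  have hE : 0 < E := Real.exp_pos w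
  have hxval : s * E = x := hinv x hx
  have hs : s ≠ 0 := by
    intro h
    apply hxne
    rw [← hxval, h, zero_mul]
  have hc2 : c ^ 2 = s ^ 2 + 1 := Real.cosh_sq (a * w)
  have hac : a * c + s ≠ 0 := by
    intro h
    apply hM x hx
    have hu : Real.exp (2 * (a * w)) = (1 - a) / (1 + a) := by
      have hs' : s = (Real.exp (a * w) - Real.exp (-(a * w))) / 2 := Real.sinh_eq _
      have hc' : c = (Real.exp (a * w) + Real.exp (-(a * w))) / 2 := Real.cosh_eq _
      have hneg : Real.exp (-(a * w)) = (Real.exp (a * w))⁻¹ := Real.exp_neg _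
      have h2 : Real.exp (2 * (a * w)) = Real.exp (a * w) * Real.exp (a * w) := by
        rw [two_mul, Real.exp_add]
      have hpos : (0:ℝ) < Real.exp (a * w) := Real.exp_pos _
      rw [hs', hc', hneg] at h
      rw [h2]
      have h1a : (0:ℝ) < 1 + a := by linarith
      field_simp at h ⊢
      nlinarith [hpos]
    have hlog : 2 * (a * w) = Real.log ((1 - a) / (1 + a)) := by
      rw [← hu, Real.log_exp]
    show w = Ma a
    rw [Ma]
    field_simp
    linarith
  set D := c * a * E + s * E with hDdef
  have hD : D ≠ 0 := by
    have : D = (a * c + s) * E := by rw [hDdef]; ring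
    rw [this]
    exact mul_ne_zero hac hE.ne'
  have hf : HasDerivAt (fun y => Real.sinh (a * y) * Real.exp y) D w := by
    have := (((hasDerivAt_id w).const_mul a).sinh).mul (Real.hasDerivAt_exp w)
    convert this using 1
    · exact rfl
    · exact rfl
    · exact rfl
    simp only [id_eq]
    rw [hDdef]; ring
  have hg' : HasDerivAt g D⁻¹ x := by
    refine HasDerivAt.of_local_left_inverse (hg.continuousAt (Ioo_mem_nhds hx.1 hx.2)) hf hD ?_
    exact Filter.eventually_of_mem (Ioo_mem_nhds hx.1 hx.2) (fun y hy => hinv y hy)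
  have h1 : HasDerivAt (fun t => t * g t) (1 * w + x * D⁻¹) x := (hasDerivAt_id x).mul hg'
  have h2 : HasDerivAt (fun t : ℝ => t / (1 - a ^ 2)) (1 / (1 - a ^ 2)) x :=
    (hasDerivAt_id x).div_const _
  have hcosh : HasDerivAt (fun t => Real.cosh (a * g t)) (s * (a * D⁻¹)) x :=
    (hg'.const_mul a).cosh
  have hsinh : HasDerivAt (fun t => Real.sinh (a * g t)) (c * (a * D⁻¹)) x :=
    (hg'.const_mul a).sinh
  have hq := hcosh.div hsinh hs
  have h3a : HasDerivAt (fun t : ℝ => a * t / (1 - a ^ 2)) (a * 1 / (1 - a ^ 2)) x :=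
    ((hasDerivAt_id x).const_mul a).div_const _
  have h3 := h3a.mul hq
  have total := (h1.sub h2).add h3
  convert total using 1
  · exact rfl
  · exact rfl
  · exact rfl
  simp only [← hw, ← hsdef, ← hcdef, ← hEdef, Pi.div_apply]
  have hEne : E ≠ 0 := hE.ne'
  clear_value w s c E D
  subst hxval
  rw [hDdef] at hD ⊢
  have hD2 : a * E * c + s * E ≠ 0 := by rwa [show c*a*E+s*E = a*E*c+s*E from by ring] at hD
  field_simp [hD2]
  ring_nf
  have hsac : s + a * c ≠ 0 := by rwa [add_comm] at hac
  field_simp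
  ring
end

section
/- For 0 < a < 1, the integral of the principal branch over [L_a, 0] equals ∫_{L_a}^{0} ψ₀(a,x) dx = (a + 2·L_a)/(1 − a²) − L_a·M_a. -/
/-- `L_a = −(a/√(1−a²))·((1−a)/(1+a))^{1/(2a)}`, the minimum value of `f(a,·)`. -/
noncomputable def La (a : ℝ) : ℝ :=
  -(a / Real.sqrt (1 - a ^ 2)) * ((1 - a) / (1 + a)) ^ (1 / (2 * a))

noncomputable def Fa (a w : ℝ) : ℝ :=
  Real.exp ((1 + a) * w) / (2 * (1 + a)) - Real.exp ((1 - a) * w) / (2 * (1 - a))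


lemma hc_pos {a : ℝ} (ha0 : 0 < a) (ha1 : a < 1) : (0:ℝ) < (1 - a) / (1 + a) :=
  div_pos (by linarith) (by linarith)

lemma exp_Ma {a : ℝ} (ha0 : 0 < a) (ha1 : a < 1) :
    Real.exp (Ma a) = ((1 - a) / (1 + a)) ^ (1 / (2 * a)) := by
  rw [Ma, Real.rpow_def_of_pos (hc_pos ha0 ha1)]
  ring_nf

lemma exp_aMa {a : ℝ} (ha0 : 0 < a) (ha1 : a < 1) :
    Real.exp (a * Ma a) = Real.sqrt ((1 - a) / (1 + a)) := by
  have ha : a ≠ 0 := ne_of_gt ha0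
  rw [Real.sqrt_eq_rpow, Real.rpow_def_of_pos (hc_pos ha0 ha1), Ma]
  congr 1
  field_simp

lemma sqrt_fac {a : ℝ} (ha0 : 0 < a) (ha1 : a < 1) :
    Real.sqrt (1 - a ^ 2) = Real.sqrt (1 - a) * Real.sqrt (1 + a) := by
  rw [← Real.sqrt_mul (by linarith)]
  congr 1; ring

lemma fab_Ma {a : ℝ} (ha0 : 0 < a) (ha1 : a < 1) : fab a (Ma a) = La a := by
  have hu0 : (0:ℝ) < Real.sqrt (1 - a) := Real.sqrt_pos.mpr (by linarith)
  have hv0 : (0:ℝ) < Real.sqrt (1 + a) := Real.sqrt_pos.mpr (by linarith)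
  set u := Real.sqrt (1 - a) with hu
  set v := Real.sqrt (1 + a) with hv
  have hu2 : u ^ 2 = 1 - a := Real.sq_sqrt (by linarith)
  have hv2 : v ^ 2 = 1 + a := Real.sq_sqrt (by linarith)
  have hsq : Real.sqrt ((1 - a) / (1 + a)) = u / v := by
    rw [hu, hv, ← Real.sqrt_div (by linarith)]
  rw [fab, Real.sinh_eq, Real.exp_neg, exp_aMa ha0 ha1, exp_Ma ha0 ha1, hsq, La,
    sqrt_fac ha0 ha1, ← hu, ← hv, inv_div]
  set r := ((1 - a) / (1 + a)) ^ (1 / (2 * a)) with hr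
  field_simp
  linear_combination r * hu2 - r * hv2

lemma Fa_Ma {a : ℝ} (ha0 : 0 < a) (ha1 : a < 1) : Fa a (Ma a) = 2 * La a / (1 - a ^ 2) := by
  have hu0 : (0:ℝ) < Real.sqrt (1 - a) := Real.sqrt_pos.mpr (by linarith)
  have hv0 : (0:ℝ) < Real.sqrt (1 + a) := Real.sqrt_pos.mpr (by linarith)
  set u := Real.sqrt (1 - a) with hu
  set v := Real.sqrt (1 + a) with hv
  have hu2 : u ^ 2 = 1 - a := Real.sq_sqrt (by linarith)
  have hv2 : v ^ 2 = 1 + a := Real.sq_sqrt (by linarith)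
  have hsq : Real.sqrt ((1 - a) / (1 + a)) = u / v := by
    rw [hu, hv, ← Real.sqrt_div (by linarith)]
  set r := ((1 - a) / (1 + a)) ^ (1 / (2 * a)) with hr
  have e1 : Real.exp ((1 + a) * Ma a) = r * (u / v) := by
    have h' : (1 + a) * Ma a = Ma a + a * Ma a := by ring
    rw [h', Real.exp_add, exp_aMa ha0 ha1, exp_Ma ha0 ha1, hsq, ← hr]
  have e2 : Real.exp ((1 - a) * Ma a) = r * (v / u) := by
    have h' : (1 - a) * Ma a = Ma a + -(a * Ma a) := by ring
    rw [h', Real.exp_add, Real.exp_neg, exp_aMa ha0 ha1, exp_Ma ha0 ha1, hsq, inv_div, ← hr]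
  rw [Fa, e1, e2, La, sqrt_fac ha0 ha1, ← hu, ← hv, ← hr]
  have h1 : 1 - a ^ 2 = u ^ 2 * v ^ 2 := by rw [hu2, hv2]; ring
  have h2 : 1 - a = u ^ 2 := hu2.symm
  have h3 : 1 + a = v ^ 2 := hv2.symm
  have ha' : a = (v ^ 2 - u ^ 2) / 2 := by rw [hu2, hv2]; ring
  rw [h1, h2, h3, ha']
  have h4 : u ^ 2 + v ^ 2 = 2 := by rw [hu2, hv2]; ring
  field_simp
  linear_combination (r*(u^2-v^2)) * h4

lemma Ma_neg {a : ℝ} (ha0 : 0 < a) (ha1 : a < 1) : Ma a < 0 := by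
  have hlog : Real.log ((1 - a) / (1 + a)) < 0 :=
    Real.log_neg (hc_pos ha0 ha1) (by rw [div_lt_one (by linarith)]; linarith)
  have h2 : 0 < 1 / (2 * a) := by positivity
  rw [Ma]; nlinarith

lemma La_neg {a : ℝ} (ha0 : 0 < a) (ha1 : a < 1) : La a < 0 := by
  have h1 : (0:ℝ) < Real.sqrt (1 - a ^ 2) := Real.sqrt_pos.mpr (by nlinarith)
  have h2 : (0:ℝ) < ((1 - a) / (1 + a)) ^ (1 / (2 * a)) :=
    Real.rpow_pos_of_pos (hc_pos ha0 ha1) _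
  rw [La]
  have h3 : 0 < a / Real.sqrt (1 - a ^ 2) := by positivity
  nlinarith

lemma hasDerivAt_Fa (a : ℝ) (ha0 : 0 < a) (ha1 : a < 1) (w : ℝ) :
    HasDerivAt (Fa a) (fab a w) w := by
  have h1 : HasDerivAt (fun w : ℝ => Real.exp ((1 + a) * w)) (Real.exp ((1 + a) * w) * ((1 + a) * 1)) w :=
    ((hasDerivAt_id w).const_mul (1 + a)).exp
  have h2 : HasDerivAt (fun w : ℝ => Real.exp ((1 - a) * w)) (Real.exp ((1 - a) * w) * ((1 - a) * 1)) w :=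
    ((hasDerivAt_id w).const_mul (1 - a)).exp
  have h := (h1.div_const (2 * (1 + a))).sub (h2.div_const (2 * (1 - a)))
  refine h.congr_deriv ?_
  have e1 : Real.exp ((1 + a) * w) = Real.exp (a * w) * Real.exp w := by
    rw [← Real.exp_add]; ring_nf
  have e2 : Real.exp ((1 - a) * w) = Real.exp (-(a * w)) * Real.exp w := by
    rw [← Real.exp_add]; ring_nf
  rw [fab, Real.sinh_eq, e1, e2]
  have hpa : (1 + a) ≠ 0 := by linarith
  have hma : (1 - a) ≠ 0 := by linarith
  field_simp



lemma hasDerivAt_fab (a w : ℝ) :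
    HasDerivAt (fab a) (Real.exp w * (Real.cosh (a * w) * a + Real.sinh (a * w))) w := by
  have h1 : HasDerivAt (fun w : ℝ => Real.sinh (a * w)) (Real.cosh (a * w) * (a * 1)) w :=
    ((hasDerivAt_id w).const_mul a).sinh
  have h2 := h1.mul (Real.hasDerivAt_exp w)
  refine h2.congr_deriv ?_
  ring

lemma deriv_fab_pos {a : ℝ} (ha0 : 0 < a) (ha1 : a < 1) {w : ℝ} (hw : Ma a < w) :
    0 < Real.exp w * (Real.cosh (a * w) * a + Real.sinh (a * w)) := by
  have ha : a ≠ 0 := ne_of_gt ha0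
  set p := Real.exp (a * w) with hp
  have hp0 : 0 < p := Real.exp_pos _
  have hlog : Real.log ((1 - a) / (1 + a)) = 2 * a * Ma a := by
    rw [Ma]; field_simp
  have hlt : (1 - a) / (1 + a) < p ^ 2 := by
    have h2 : p ^ 2 = Real.exp (2 * (a * w)) := by
      rw [pow_two, ← Real.exp_add]; ring_nf
    rw [h2, ← Real.exp_log (hc_pos ha0 ha1)]
    apply Real.exp_lt_exp.mpr
    rw [hlog]; nlinarith
  have hkey : 1 - a < (1 + a) * p ^ 2 := by
    rw [div_lt_iff₀ (by linarith)] at hlt; linarith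
  have heq : Real.cosh (a * w) * a + Real.sinh (a * w)
      = ((1 + a) * p ^ 2 - (1 - a)) / (2 * p) := by
    rw [Real.cosh_eq, Real.sinh_eq, Real.exp_neg, ← hp]
    field_simp
    ring
  rw [heq]
  have : 0 < ((1 + a) * p ^ 2 - (1 - a)) / (2 * p) := by
    apply div_pos (by linarith) (by linarith)
  positivity

lemma fab_mono {a : ℝ} (ha0 : 0 < a) (ha1 : a < 1) :
    StrictMonoOn (fab a) (Set.Ici (Ma a)) := by
  apply strictMonoOn_of_deriv_pos (convex_Ici _)
  · have : Continuous (fab a) := by unfold fab; fun_prop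
    exact this.continuousOn
  · intro x hx
    rw [interior_Ici] at hx
    rw [(hasDerivAt_fab a x).deriv]
    exact deriv_fab_pos ha0 ha1 hx

/-- The integral of the principal branch `ψ₀(a,·)` over `[L_a, 0]`. -/
theorem stmt_3 (a : ℝ) (ha0 : 0 < a) (ha1 : a < 1) (psi0 : ℝ → ℝ)
    (hpsi0 : ∀ x, La a ≤ x → Ma a ≤ psi0 x ∧ fab a (psi0 x) = x) :
    ∫ x in La a..0, psi0 x = (a + 2 * La a) / (1 - a ^ 2) - La a * Ma a := by
  have hM0 : Ma a < 0 := Ma_neg ha0 ha1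
  have hL0 : La a < 0 := La_neg ha0 ha1
  have hmono := fab_mono ha0 ha1
  have hfabM : fab a (Ma a) = La a := fab_Ma ha0 ha1
  have hfab0 : fab a 0 = 0 := by simp [fab]
  have hge : ∀ w, Ma a ≤ w → La a ≤ fab a w := fun w hw => by
    rw [← hfabM]
    exact hmono.monotoneOn Set.self_mem_Ici hw hw
  have hinv : ∀ w, Ma a ≤ w → psi0 (fab a w) = w := fun w hw => by
    obtain ⟨h1, h2⟩ := hpsi0 _ (hge w hw)
    exact hmono.injOn h1 hw h2
  have hpsi_mono : StrictMonoOn psi0 (Set.Ici (La a)) := by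
    intro x hx y hy hxy
    obtain ⟨hx1, hx2⟩ := hpsi0 x hx
    obtain ⟨hy1, hy2⟩ := hpsi0 y hy
    have h := hxy
    rw [← hx2, ← hy2] at h
    exact (hmono.lt_iff_lt hx1 hy1).mp h
  have hpsi_cont : ContinuousOn psi0 (Set.Icc (La a) 0) := by
    intro x hx
    have hxL : La a ≤ x := hx.1
    have hR : ContinuousWithinAt psi0 (Set.Ici x) x := by
      apply hpsi_mono.continuousWithinAt_right_of_surjOn
      · exact Filter.mem_of_superset self_mem_nhdsWithin (Set.Ici_subset_Ici.mpr hxL)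
      · intro b hb
        have hbM : Ma a ≤ b := le_of_lt (lt_of_le_of_lt (hpsi0 x hxL).1 hb)
        exact ⟨fab a b, hge b hbM, hinv b hbM⟩
    rcases eq_or_lt_of_le hxL with heq | hlt
    · exact hR.mono (by rw [← heq]; exact fun y hy => hy.1)
    · have hL : ContinuousWithinAt psi0 (Set.Iic x) x := by
        apply hpsi_mono.continuousWithinAt_left_of_exists_between
        · exact mem_nhdsWithin_of_mem_nhds (Ici_mem_nhds hlt)
        · intro b hb
          have hpx : Ma a < psi0 x := by
            rcases eq_or_lt_of_le (hpsi0 x hxL).1 with he | hl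
            · exfalso
              have := (hpsi0 x hxL).2
              rw [← he, hfabM] at this
              exact absurd this.symm (ne_of_gt hlt)
            · exact hl
          have hwM : Ma a ≤ max b (Ma a) := le_max_right _ _
          have hw_lt : max b (Ma a) < psi0 x := max_lt hb hpx
          exact ⟨fab a (max b (Ma a)), hge _ hwM,
            by rw [hinv _ hwM]; exact ⟨le_max_left _ _, hw_lt⟩⟩
      exact (hR.union hL).mono fun y _ => (le_total x y).elim Or.inl Or.inr
  -- substitution
  set E : ℝ → ℝ := fun x => Real.exp x * (Real.cosh (a * x) * a + Real.sinh (a * x)) with hE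
  have huIcc : Set.uIcc (Ma a) 0 = Set.Icc (Ma a) 0 := Set.uIcc_of_le hM0.le
  have hderiv : ∀ x ∈ Set.uIcc (Ma a) 0, HasDerivAt (fab a) (E x) x :=
    fun x _ => hasDerivAt_fab a x
  have hEcont : ContinuousOn E (Set.uIcc (Ma a) 0) := by
    apply Continuous.continuousOn; rw [hE]; fun_prop
  have himg : ContinuousOn psi0 (fab a '' Set.uIcc (Ma a) 0) := by
    apply hpsi_cont.mono
    rw [huIcc]
    rintro _ ⟨w, hw, rfl⟩
    exact ⟨hge w hw.1, by rw [← hfab0]; exact hmono.monotoneOn hw.1 hM0.le hw.2⟩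
  have hsub := intervalIntegral.integral_comp_smul_deriv' hderiv hEcont himg
  rw [hfabM, hfab0] at hsub
  rw [← hsub]
  have hcongr : Set.EqOn (fun x => E x • (psi0 ∘ fab a) x) (fun x => E x * x)
      (Set.uIcc (Ma a) 0) := by
    intro x hxm
    rw [huIcc] at hxm
    simp only [Function.comp, smul_eq_mul]
    rw [hinv x hxm.1]
  rw [intervalIntegral.integral_congr hcongr]
  have hH : ∀ x ∈ Set.uIcc (Ma a) 0, HasDerivAt (fun w => w * fab a w - Fa a w) (E x * x) x := by
    intro x _
    have h := ((hasDerivAt_id x).mul (hasDerivAt_fab a x)).sub (hasDerivAt_Fa a ha0 ha1 x)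
    refine h.congr_deriv ?_
    simp only [id_eq, hE]; ring
  rw [intervalIntegral.integral_eq_sub_of_hasDerivAt hH
    (by apply Continuous.intervalIntegrable; rw [hE]; fun_prop)]
  rw [hfab0, hfabM, Fa_Ma ha0 ha1]
  have hFa0 : Fa a 0 = 1 / (2 * (1 + a)) - 1 / (2 * (1 - a)) := by simp [Fa]
  rw [hFa0]
  have h1 : (1:ℝ) - a ^ 2 ≠ 0 := by nlinarith
  have h2 : (1:ℝ) + a ≠ 0 := by linarith
  have h3 : (1:ℝ) - a ≠ 0 := by linarith
  field_simp
  ring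
end

section
/- For 0 < a < 1, the branch ψ₋₁(a,·) is (improperly) integrable on [L_a, 0) and ∫_{L_a}^{0} ψ₋₁(a,x) dx = 2·L_a/(1 − a²) − L_a·M_a, which equals (((1−a)/(1+a))^{1/(2a)} / (2·√(1−a²)))·( −4a/(1−a²) + log((1−a)/(1+a)) ). -/
open Real Set Filter MeasureTheory Topology


/-- derivative of `fab a` -/
noncomputable def fd (a w : ℝ) : ℝ :=
  (a * Real.cosh (a * w) + Real.sinh (a * w)) * Real.exp w

/-- antiderivative of `fab a` -/
noncomputable def Fb (a w : ℝ) : ℝ :=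
  Real.exp ((1 + a) * w) / (2 * (1 + a)) - Real.exp ((1 - a) * w) / (2 * (1 - a))

noncomputable def Gb (a w : ℝ) : ℝ := -(w * fab a w) + Fb a w

section basics
variable {a : ℝ} (ha0 : 0 < a) (ha1 : a < 1)
include ha0 ha1

lemma hq_pos : 0 < (1 - a) / (1 + a) := div_pos (by linarith) (by linarith)

lemma hlogq_neg : Real.log ((1 - a) / (1 + a)) < 0 :=
  Real.log_neg (hq_pos ha0 ha1) ((div_lt_one (by linarith)).2 (by linarith))

lemma hMa_neg : Ma a < 0 :=
  mul_neg_of_pos_of_neg (by positivity) (hlogq_neg ha0 ha1)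

lemma hexpMa : Real.exp (Ma a) = ((1 - a) / (1 + a)) ^ (1 / (2 * a)) := by
  rw [Real.rpow_def_of_pos (hq_pos ha0 ha1), Ma, mul_comm]

lemma hexpaMa : Real.exp (a * Ma a) = Real.sqrt ((1 - a) / (1 + a)) := by
  rw [Real.sqrt_eq_rpow, Real.rpow_def_of_pos (hq_pos ha0 ha1), Ma]
  congr 1
  field_simp

lemma hsinhMa : Real.sinh (a * Ma a) = -a / Real.sqrt (1 - a ^ 2) := by
  have h1 : (0:ℝ) < 1 - a := by linarith
  have h2 : (0:ℝ) < 1 + a := by linarith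
  set u := Real.sqrt (1 - a) with hu
  set v := Real.sqrt (1 + a) with hv
  have hu0 : 0 < u := Real.sqrt_pos.2 h1
  have hv0 : 0 < v := Real.sqrt_pos.2 h2
  have hu2 : u ^ 2 = 1 - a := Real.sq_sqrt h1.le
  have hv2 : v ^ 2 = 1 + a := Real.sq_sqrt h2.le
  have hdiv : Real.sqrt ((1 - a) / (1 + a)) = u / v := Real.sqrt_div h1.le _
  have hmul : Real.sqrt (1 - a ^ 2) = u * v := by
    rw [show 1 - a ^ 2 = (1 - a) * (1 + a) by ring, Real.sqrt_mul h1.le]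
  rw [Real.sinh_eq, hexpaMa ha0 ha1, Real.exp_neg, hexpaMa ha0 ha1, hdiv, hmul]
  rw [inv_div, div_sub_div _ _ hv0.ne' hu0.ne']
  rw [show u * u - v * v = u^2 - v^2 by ring, hu2, hv2]
  rw [show (1 - a) - (1 + a) = -2 * a by ring]
  field_simp

lemma hfabMa : fab a (Ma a) = La a := by
  rw [fab, hsinhMa ha0 ha1, hexpMa ha0 ha1, La, neg_div]

lemma hFbMa : Fb a (Ma a) = 2 * La a / (1 - a ^ 2) := by
  have h1 : (0:ℝ) < 1 - a := by linarith
  have h2 : (0:ℝ) < 1 + a := by linarith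
  set u := Real.sqrt (1 - a) with hu
  set v := Real.sqrt (1 + a) with hv
  have hu0 : 0 < u := Real.sqrt_pos.2 h1
  have hv0 : 0 < v := Real.sqrt_pos.2 h2
  have hu2 : u ^ 2 = 1 - a := Real.sq_sqrt h1.le
  have hv2 : v ^ 2 = 1 + a := Real.sq_sqrt h2.le
  have hdiv : Real.sqrt ((1 - a) / (1 + a)) = u / v := Real.sqrt_div h1.le _
  have hmul : Real.sqrt (1 - a ^ 2) = u * v := by
    rw [show 1 - a ^ 2 = (1 - a) * (1 + a) by ring, Real.sqrt_mul h1.le]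
  have e1 : Real.exp ((1 + a) * Ma a) = ((1 - a) / (1 + a)) ^ (1 / (2 * a)) * (u / v) := by
    rw [show (1 + a) * Ma a = Ma a + a * Ma a by ring, Real.exp_add, hexpMa ha0 ha1,
      hexpaMa ha0 ha1, hdiv]
  have e2 : Real.exp ((1 - a) * Ma a) = ((1 - a) / (1 + a)) ^ (1 / (2 * a)) * (v / u) := by
    rw [show (1 - a) * Ma a = Ma a + -(a * Ma a) by ring, Real.exp_add, hexpMa ha0 ha1,
      Real.exp_neg, hexpaMa ha0 ha1, hdiv, inv_div]
  rw [Fb, e1, e2, La, hmul]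
  set r := ((1 - a) / (1 + a)) ^ (1 / (2 * a)) with hr
  have h12 : u^2 * v^2 = 1 - a^2 := by rw [hu2, hv2]; ring
  have huv : u^2 + v^2 = 2 := by rw [hu2, hv2]; ring
  have ha : a = (v^2 - u^2)/2 := by rw [hu2, hv2]; ring
  rw [← hu2, ← hv2, ← h12, ha]
  field_simp
  linear_combination (r*(u^2-v^2)) * huv

end basics

section deriv
variable {a : ℝ}

lemma hderiv_fab (w : ℝ) : HasDerivAt (fab a) (fd a w) w := by
  have h0 : HasDerivAt (fun x : ℝ => a * x) a w := by
    simpa using (hasDerivAt_id w).const_mul a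
  have h1 : HasDerivAt (fun x : ℝ => Real.sinh (a * x)) (Real.cosh (a * w) * a) w :=
    (Real.hasDerivAt_sinh (a * w)).comp w h0
  have h2 := h1.mul (Real.hasDerivAt_exp w)
  have he : fd a w = Real.cosh (a*w) * a * Real.exp w + Real.sinh (a*w) * Real.exp w := by
    rw [fd]; ring
  rw [he]; exact h2

variable (ha0 : 0 < a) (ha1 : a < 1)
include ha0 ha1

lemma hfd_neg {w : ℝ} (hw : w < Ma a) : fd a w < 0 := by
  have h2 : (0:ℝ) < 1 + a := by linarith
  have ht : 2 * (a * w) < Real.log ((1 - a) / (1 + a)) := by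
    have : a * w < a * Ma a := by exact (mul_lt_mul_iff_right₀ ha0).2 hw
    have h' : a * Ma a = Real.log ((1 - a) / (1 + a)) / 2 := by
      rw [Ma]; field_simp
    rw [h'] at this; linarith
  have hkey : (1 + a) * (Real.exp (a*w) * Real.exp (a*w)) < 1 - a := by
    have : Real.exp (2 * (a*w)) < (1 - a) / (1 + a) := by
      calc Real.exp (2 * (a*w)) < Real.exp (Real.log ((1 - a) / (1 + a))) :=
            Real.exp_lt_exp.2 ht
        _ = (1 - a) / (1 + a) := Real.exp_log (hq_pos ha0 ha1)
    rw [show 2 * (a*w) = a*w + a*w by ring, Real.exp_add] at this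
    calc (1 + a) * (Real.exp (a*w) * Real.exp (a*w)) < (1 + a) * ((1 - a)/(1 + a)) := by
          exact (mul_lt_mul_iff_right₀ h2).2 this
      _ = 1 - a := by field_simp
  rw [fd]
  apply mul_neg_of_neg_of_pos _ (Real.exp_pos w)
  rw [Real.cosh_eq, Real.sinh_eq]
  have hp : Real.exp (a*w) * Real.exp (-(a*w)) = 1 := by
    rw [← Real.exp_add]; simp
  nlinarith [Real.exp_pos (a*w), Real.exp_pos (-(a*w))]

lemma hanti : StrictAntiOn (fab a) (Iic (Ma a)) := by
  apply strictAntiOn_of_deriv_neg (convex_Iic _)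
  · exact (Real.continuous_sinh.comp (continuous_const.mul continuous_id)).mul
      Real.continuous_exp |>.continuousOn
  · intro x hx
    rw [interior_Iic] at hx
    rw [(hderiv_fab x).deriv]
    exact hfd_neg ha0 ha1 hx

lemma hfab_lt {w : ℝ} (hw : w < Ma a) : La a < fab a w := by
  have := hanti ha0 ha1 (mem_Iic.2 hw.le) (mem_Iic.2 le_rfl) hw
  rwa [hfabMa ha0 ha1] at this

lemma hfab_neg {w : ℝ} (hw : w < Ma a) : fab a w < 0 := by
  have hw0 : w < 0 := hw.trans (hMa_neg ha0 ha1)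
  exact mul_neg_of_neg_of_pos (Real.sinh_neg_iff.2 (by nlinarith)) (Real.exp_pos w)

lemma htendsto_fab : Tendsto (fab a) atBot (𝓝 0) := by
  have h1 : Tendsto (fun w : ℝ => Real.exp ((1+a)*w)) atBot (𝓝 0) :=
    Real.tendsto_exp_atBot.comp (tendsto_id.const_mul_atBot (by linarith))
  have h2 : Tendsto (fun w : ℝ => Real.exp ((1-a)*w)) atBot (𝓝 0) :=
    Real.tendsto_exp_atBot.comp (tendsto_id.const_mul_atBot (by linarith))
  have := (h1.sub h2).div_const 2
  simp only [sub_self, zero_div] at this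
  apply this.congr
  intro w
  rw [fab, Real.sinh_eq, show (1+a)*w = a*w + w by ring, show (1-a)*w = -(a*w) + w by ring,
    Real.exp_add, Real.exp_add]
  ring

lemma himage : fab a '' (Iio (Ma a)) = Ioo (La a) 0 := by
  apply Subset.antisymm
  · rintro y ⟨w, hw, rfl⟩
    exact ⟨hfab_lt ha0 ha1 hw, hfab_neg ha0 ha1 hw⟩
  · rintro y ⟨hy1, hy2⟩
    have hev : ∀ᶠ w in atBot, fab a w ∈ Ioi y :=
      (htendsto_fab ha0 ha1).eventually_mem (Ioi_mem_nhds hy2)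
    obtain ⟨w0, hw0y, hw0M⟩ := (hev.and (eventually_lt_atBot (Ma a))).exists
    have hcont : ContinuousOn (fab a) (Icc w0 (Ma a)) :=
      ((Real.continuous_sinh.comp (continuous_const.mul continuous_id)).mul
        Real.continuous_exp).continuousOn
    have := intermediate_value_Ioo' hw0M.le hcont
    have hy : y ∈ Ioo (fab a (Ma a)) (fab a w0) := by
      rw [hfabMa ha0 ha1]; exact ⟨hy1, hw0y⟩
    obtain ⟨c, hc, hcy⟩ := this hy
    exact ⟨c, hc.2, hcy⟩

end deriv

section Gmach
variable {a : ℝ} (ha0 : 0 < a) (ha1 : a < 1)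
include ha0 ha1

lemma hderiv_Fb (w : ℝ) : HasDerivAt (Fb a) (fab a w) w := by
  have h1 : HasDerivAt (fun x : ℝ => (1+a) * x) (1+a) w := by
    simpa using (hasDerivAt_id w).const_mul (1+a)
  have h2 : HasDerivAt (fun x : ℝ => (1-a) * x) (1-a) w := by
    simpa using (hasDerivAt_id w).const_mul (1-a)
  have e1 := ((Real.hasDerivAt_exp ((1+a)*w)).comp w h1).div_const (2*(1+a))
  have e2 := ((Real.hasDerivAt_exp ((1-a)*w)).comp w h2).div_const (2*(1-a))
  have h := e1.sub e2
  have he : fab a w = Real.exp ((1+a)*w) * (1+a) / (2*(1+a))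
      - Real.exp ((1-a)*w) * (1-a) / (2*(1-a)) := by
    rw [fab, Real.sinh_eq, show (1+a)*w = a*w + w by ring, show (1-a)*w = -(a*w) + w by ring,
      Real.exp_add, Real.exp_add]
    have n1 : (1:ℝ)+a ≠ 0 := by linarith
    have n2 : (1:ℝ)-a ≠ 0 := by linarith
    field_simp
  rw [he]; exact h

lemma hderiv_Gb (w : ℝ) : HasDerivAt (Gb a) (-(w * fd a w)) w := by
  have h1 : HasDerivAt (fun x : ℝ => x * fab a x) (1 * fab a w + w * fd a w) w :=
    (hasDerivAt_id w).mul (hderiv_fab w)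
  have h := h1.neg.add (hderiv_Fb ha0 ha1 w)
  have he : -(w * fd a w) = -(1 * fab a w + w * fd a w) + fab a w := by ring
  rw [he]; exact h

omit ha0 ha1 in
lemma tendsto_mul_exp_atBot {c : ℝ} (hc : 0 < c) :
    Tendsto (fun w : ℝ => w * Real.exp (c * w)) atBot (𝓝 0) := by
  have h := Real.tendsto_pow_mul_exp_neg_atTop_nhds_zero 1
  have hcomp : Tendsto (fun w : ℝ => -(c * w)) atBot atTop := by
    apply tendsto_neg_atBot_atTop.comp
    exact tendsto_id.const_mul_atBot hc
  have h3 := (h.comp hcomp).const_mul (-1/c)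
  rw [mul_zero] at h3
  apply h3.congr
  intro w
  show (-1/c) * ((-(c*w))^1 * Real.exp (-(-(c*w)))) = w * Real.exp (c*w)
  rw [neg_neg, pow_one]
  have : (-1/c) * (-(c*w) * Real.exp (c*w)) = (c/c) * (w * Real.exp (c*w)) := by ring
  rw [this, div_self hc.ne', one_mul]

lemma hGb_tendsto : Tendsto (Gb a) atBot (𝓝 0) := by
  have n1 : (1:ℝ)+a ≠ 0 := by linarith
  have n2 : (1:ℝ)-a ≠ 0 := by linarith
  have p1 : (0:ℝ) < 1+a := by linarith
  have p2 : (0:ℝ) < 1-a := by linarith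
  have e1 : Tendsto (fun w : ℝ => Real.exp ((1+a)*w)) atBot (𝓝 0) :=
    Real.tendsto_exp_atBot.comp (tendsto_id.const_mul_atBot p1)
  have e2 : Tendsto (fun w : ℝ => Real.exp ((1-a)*w)) atBot (𝓝 0) :=
    Real.tendsto_exp_atBot.comp (tendsto_id.const_mul_atBot p2)
  have m1 := tendsto_mul_exp_atBot p1
  have m2 := tendsto_mul_exp_atBot p2
  have := ((m1.const_mul (-1/2 : ℝ)).add (e1.const_mul (1/(2*(1+a))))).add
    ((m2.const_mul (1/2 : ℝ)).add (e2.const_mul (-1/(2*(1-a)))))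
  simp only [mul_zero, add_zero] at this
  apply this.congr
  intro w
  rw [Gb, Fb, fab, Real.sinh_eq, show (1+a)*w = a*w + w by ring,
    show (1-a)*w = -(a*w) + w by ring, Real.exp_add, Real.exp_add]
  field_simp
  ring

lemma hGbMa : Gb a (Ma a) = 2 * La a / (1 - a ^ 2) - La a * Ma a := by
  rw [Gb, hfabMa ha0 ha1, hFbMa ha0 ha1]; ring

end Gmach

lemma integrableOn_of_comp_neg {f : ℝ → ℝ} {c : ℝ}
    (h : IntegrableOn (fun w => f (-w)) (Ioi c)) : IntegrableOn f (Iic (-c)) := by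
  have m : MeasurableEmbedding (fun x : ℝ => -x) :=
    (Homeomorph.neg ℝ).measurableEmbedding
  rw [← Measure.map_neg_eq_self (volume : Measure ℝ)]
  rw [m.integrableOn_map_iff]
  simp_rw [Function.comp_def, neg_preimage, neg_Iic, neg_neg]
  exact (integrableOn_Ici_iff_integrableOn_Ioi).mpr h


set_option maxHeartbeats 1000000 in
/-- The branch `ψ₋₁(a,·)` is integrable on `[L_a, 0)` with
`∫ ψ₋₁ = 2L_a/(1−a²) − L_a·M_a`, which equals the stated closed form. -/
theorem stmt_4 (a : ℝ) (ha0 : 0 < a) (ha1 : a < 1) (psi1 : ℝ → ℝ)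
    (hpsi1 : ∀ x, La a ≤ x → x < 0 → psi1 x ≤ Ma a ∧ fab a (psi1 x) = x) :
    MeasureTheory.IntegrableOn psi1 (Set.Ico (La a) 0) ∧
    (∫ x in Set.Ico (La a) 0, psi1 x) = 2 * La a / (1 - a ^ 2) - La a * Ma a ∧
    2 * La a / (1 - a ^ 2) - La a * Ma a =
      (((1 - a) / (1 + a)) ^ (1 / (2 * a)) / (2 * Real.sqrt (1 - a ^ 2))) *
        (-4 * a / (1 - a ^ 2) + Real.log ((1 - a) / (1 + a))) := by
  have hM := hMa_neg ha0 ha1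
  have hpsi_eq : ∀ w ∈ Iio (Ma a), psi1 (fab a w) = w := by
    intro w hw
    obtain ⟨h1, h2⟩ := hpsi1 (fab a w) (hfab_lt ha0 ha1 hw).le (hfab_neg ha0 ha1 hw)
    exact (hanti ha0 ha1).injOn (mem_Iic.2 h1) (mem_Iic.2 (le_of_lt hw)) h2
  have hd : ∀ w ∈ Iio (Ma a), HasDerivWithinAt (fab a) (fd a w) (Iio (Ma a)) w :=
    fun w _ => (hderiv_fab w).hasDerivWithinAt
  have hinj : InjOn (fab a) (Iio (Ma a)) :=
    ((hanti ha0 ha1).injOn).mono Iio_subset_Iic_self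
  have hcongr : EqOn (fun w => |fd a w| • psi1 (fab a w)) (fun w => -(w * fd a w))
      (Iio (Ma a)) := by
    intro w hw
    simp only [smul_eq_mul]
    rw [hpsi_eq w hw, abs_of_neg (hfd_neg ha0 ha1 hw)]; ring
  -- reflected improper integral
  have hgderiv : ∀ w : ℝ, HasDerivAt (fun x => Gb a (-x)) (-(w * fd a (-w))) w := by
    intro w
    have := (hderiv_Gb ha0 ha1 (-w)).comp w (hasDerivAt_neg w)
    exact this.congr_deriv (by ring)
  have hgpos : ∀ x ∈ Ioi (-(Ma a)), 0 ≤ -(x * fd a (-x)) := by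
    intro x hx
    have h1 : -x < Ma a := by simp only [mem_Ioi] at hx; linarith
    have h2 : fd a (-x) < 0 := hfd_neg ha0 ha1 h1
    have h3 : 0 < x := lt_of_le_of_lt (by linarith) hx
    nlinarith
  have hgtend : Tendsto (fun x => Gb a (-x)) atTop (𝓝 (0:ℝ)) :=
    (hGb_tendsto ha0 ha1).comp tendsto_neg_atTop_atBot
  have hint : IntegrableOn (fun x => -(x * fd a (-x))) (Ioi (-(Ma a))) :=
    integrableOn_Ioi_deriv_of_nonneg' (fun x _ => hgderiv x) hgpos hgtend
  have hval : (∫ x in Ioi (-(Ma a)), -(x * fd a (-x))) = 0 - Gb a (-(-(Ma a))) :=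
    integral_Ioi_of_hasDerivAt_of_nonneg' (fun x _ => hgderiv x) hgpos hgtend
  rw [neg_neg] at hval
  -- transfer to Iic (Ma a)
  have hint2 : IntegrableOn (fun y => y * fd a y) (Iic (Ma a)) := by
    have h' : IntegrableOn (fun w => (fun y : ℝ => y * fd a y) (-w)) (Ioi (-(Ma a))) := by
      simpa [neg_mul] using hint
    simpa using integrableOn_of_comp_neg (f := fun y : ℝ => y * fd a y) (c := -(Ma a)) h'
  have hval2 : (∫ y in Iic (Ma a), y * fd a y) = -(Gb a (Ma a)) := by
    have hcn := integral_comp_neg_Ioi (-(Ma a)) (fun y : ℝ => y * fd a y)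
    rw [neg_neg] at hcn
    rw [← hcn]
    have heq : (∫ x in Ioi (-(Ma a)), -x * fd a (-x))
        = ∫ x in Ioi (-(Ma a)), -(x * fd a (-x)) := by
      congr 1; funext x; ring
    rw [heq, hval]; ring
  -- measure identifications
  have hIcoIoo : (volume : Measure ℝ).restrict (Ico (La a) 0)
      = volume.restrict (Ioo (La a) 0) :=
    (Measure.restrict_congr_set Ioo_ae_eq_Ico).symm
  have hIioIic : (volume : Measure ℝ).restrict (Iio (Ma a))
      = volume.restrict (Iic (Ma a)) :=
    Measure.restrict_congr_set Iio_ae_eq_Iic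
  -- integrability on Iio (Ma a)
  have hG'int : IntegrableOn (fun w => -(w * fd a w)) (Iio (Ma a)) := by
    have : IntegrableOn (fun y => -(y * fd a y)) (Iic (Ma a)) := by
      exact hint2.neg'
    exact this.mono_set Iio_subset_Iic_self
  have hintIio : IntegrableOn (fun w => |fd a w| • psi1 (fab a w)) (Iio (Ma a)) :=
    hG'int.congr_fun (fun w hw => (hcongr hw).symm) measurableSet_Iio
  have Hint : IntegrableOn psi1 (Ioo (La a) 0) := by
    rw [← himage ha0 ha1]
    exact (integrableOn_image_iff_integrableOn_abs_deriv_smul measurableSet_Iio hd hinj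
      psi1).2 hintIio
  have Hval : (∫ x in Ioo (La a) 0, psi1 x) = Gb a (Ma a) := by
    rw [← himage ha0 ha1,
      integral_image_eq_integral_abs_deriv_smul measurableSet_Iio hd hinj psi1,
      setIntegral_congr_fun measurableSet_Iio hcongr]
    have h1 : (∫ w in Iio (Ma a), -(w * fd a w)) = ∫ w in Iic (Ma a), -(w * fd a w) := by
      rw [hIioIic]
    rw [h1, integral_neg, hval2, neg_neg]
  refine ⟨?_, ?_, ?_⟩
  · unfold IntegrableOn
    rw [hIcoIoo]
    exact Hint
  · have : (∫ x in Ico (La a) 0, psi1 x) = ∫ x in Ioo (La a) 0, psi1 x := by rw [hIcoIoo]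
    rw [this, Hval, hGbMa ha0 ha1]
  · have hs2 : (0:ℝ) < 1 - a ^ 2 := by nlinarith
    have hs : (0:ℝ) < Real.sqrt (1 - a ^ 2) := Real.sqrt_pos.2 hs2
    rw [La, Ma]
    field_simp
    ring
end

section
/- For every z < 0, the transition function at a = 1/3 is given explicitly by ω(1/3, z) = (3/2)·log(1 − e^{2z/3}). Equivalently, for z < 0 the number y = (3/2)·log(1 − e^{2z/3}) satisfies sinh(y/3)·e^y = sinh(z/3)·e^z, and y ≥ M_{1/3} when z ≤ M_{1/3} while y ≤ M_{1/3} when M_{1/3} ≤ z < 0, where M_{1/3} = −(3/2)·log 2. -/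
lemma sinh_form (w : ℝ) :
    Real.sinh ((1/3 : ℝ) * w) * Real.exp w
      = (Real.exp (2 * w / 3) ^ 2 - Real.exp (2 * w / 3)) / 2 := by
  have e1 : Real.exp (w/3) * Real.exp w = Real.exp (2*w/3) ^ 2 := by
    rw [sq, ← Real.exp_add, ← Real.exp_add]; ring_nf
  have e2 : Real.exp (-w/3) * Real.exp w = Real.exp (2*w/3) := by
    rw [← Real.exp_add]; ring_nf
  rw [Real.sinh_eq, show (1/3:ℝ)*w = w/3 by ring]
  field_simp
  rw [show -(w/3) = -w/3 by ring, show w*2/3 = 2*w/3 by ring]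
  linarith

lemma fab_form (w : ℝ) :
    fab (1/3) w = (Real.exp (2 * w / 3) ^ 2 - Real.exp (2 * w / 3)) / 2 :=
  sinh_form w

lemma Ma13 : Ma (1/3) = -(3 / 2) * Real.log 2 := by
  unfold Ma
  rw [show ((1:ℝ) - 1/3) / (1 + 1/3) = (2 : ℝ)⁻¹ by norm_num, Real.log_inv]
  norm_num

lemma La13 : La (1/3) = -(1/8 : ℝ) := by
  unfold La
  rw [show ((1:ℝ) - 1/3) / (1 + 1/3) = (1/2 : ℝ) by norm_num,
    show (1:ℝ) / (2 * (1/3)) = (3:ℝ)/2 by norm_num,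
    show (1:ℝ) - (1/3:ℝ)^2 = 8/9 by norm_num]
  have h3 : ((1/2 : ℝ)) ^ ((3 : ℝ)/2) = Real.sqrt (1/8) := by
    rw [show ((3 : ℝ)/2) = (3 : ℕ) * (1/2 : ℝ) by norm_num,
      Real.rpow_mul (by norm_num), Real.rpow_natCast,
      show ((1/2 : ℝ))^(3:ℕ) = 1/8 by norm_num, ← Real.sqrt_eq_rpow]
  rw [h3]
  have hpos : (0:ℝ) < Real.sqrt (8/9) := Real.sqrt_pos.mpr (by norm_num)
  have hmul : Real.sqrt (8/9 : ℝ) * Real.sqrt (1/8 : ℝ) = 1/3 := by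
    rw [← Real.sqrt_mul (by norm_num), show (8/9 : ℝ) * (1/8) = (1/3)^2 by norm_num,
      Real.sqrt_sq (by norm_num)]
  have hsq : Real.sqrt (1/8 : ℝ) * Real.sqrt (1/8 : ℝ) = 1/8 :=
    Real.mul_self_sqrt (by norm_num)
  have hkey : (1/3:ℝ) * Real.sqrt (1/8) = (1/8) * Real.sqrt (8/9) := by
    calc (1/3:ℝ) * Real.sqrt (1/8)
        = (Real.sqrt (8/9) * Real.sqrt (1/8)) * Real.sqrt (1/8) := by rw [hmul]
      _ = Real.sqrt (8/9) * (Real.sqrt (1/8) * Real.sqrt (1/8)) := by ring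
      _ = (1/8) * Real.sqrt (8/9) := by rw [hsq]; ring
  have hfin : (1/3:ℝ)/Real.sqrt (8/9) * Real.sqrt (1/8) = 1/8 := by
    rw [div_mul_eq_mul_div, hkey, mul_div_assoc, div_self hpos.ne', mul_one]
  rw [neg_mul, hfin]

/-- injectivity of `f(1/3,·)` on each side of the critical point,
expressed through `t = exp(2w/3)`. -/
lemma inj13 (u v : ℝ)
    (h : Real.exp (2*u/3) ^ 2 - Real.exp (2*u/3)
       = Real.exp (2*v/3) ^ 2 - Real.exp (2*v/3))
    (hside : (1/2 ≤ Real.exp (2*u/3) ∧ 1/2 ≤ Real.exp (2*v/3)) ∨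
             (Real.exp (2*u/3) ≤ 1/2 ∧ Real.exp (2*v/3) ≤ 1/2)) :
    u = v := by
  set a := Real.exp (2*u/3) with ha
  set b := Real.exp (2*v/3) with hb
  have hab : a = b := by
    have hfac : (a - b) * (a + b - 1) = 0 := by ring_nf; nlinarith [h]
    rcases mul_eq_zero.mp hfac with h1 | h1
    · linarith
    · rcases hside with ⟨h2, h3⟩ | ⟨h2, h3⟩ <;> linarith
  have := Real.exp_injective (ha ▸ hb ▸ hab)
  linarith

/-- For `z < 0`, the transition function at `a = 1/3` is
`ω(1/3,z) = (3/2)·log(1 − e^{2z/3})`; equivalently `y = (3/2)·log(1 − e^{2z/3})`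
satisfies `sinh(y/3)·e^y = sinh(z/3)·e^z` and lies on the opposite side of
`M_{1/3} = −(3/2)·log 2` from `z`. -/
theorem stmt_8 (psi0 psi1 : ℝ → ℝ)
    (hpsi0 : ∀ x, La (1/3) ≤ x → Ma (1/3) ≤ psi0 x ∧ fab (1/3) (psi0 x) = x)
    (hpsi1 : ∀ x, La (1/3) ≤ x → x < 0 → psi1 x ≤ Ma (1/3) ∧ fab (1/3) (psi1 x) = x)
    (z : ℝ) (hz : z < 0) :
    let M : ℝ := -(3 / 2) * Real.log 2
    let y : ℝ := (3 / 2) * Real.log (1 - Real.exp (2 * z / 3))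
    (if z < Ma (1/3) then psi0 (fab (1/3) z) else psi1 (fab (1/3) z)) = y ∧
    Real.sinh (y / 3) * Real.exp y = Real.sinh (z / 3) * Real.exp z ∧
    (z ≤ M → M ≤ y) ∧ (M ≤ z → y ≤ M) := by
  intro M y
  set t := Real.exp (2 * z / 3) with htdef
  have ht0 : 0 < t := Real.exp_pos _
  have ht1 : t < 1 := by
    rw [htdef, Real.exp_lt_one_iff]; linarith
  have hy_exp : Real.exp (2 * y / 3) = 1 - t := by
    have : 2 * y / 3 = Real.log (1 - t) := by simp only [y]; ring
    rw [this, Real.exp_log (by linarith)]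
  have hM_exp : Real.exp (2 * M / 3) = 1/2 := by
    have : 2 * M / 3 = -Real.log 2 := by simp only [M]; ring
    rw [this, Real.exp_neg, Real.exp_log (by norm_num)]
    norm_num
  -- translation between order on reals and order on exponentials
  have hord : ∀ u v : ℝ, u ≤ v ↔ Real.exp (2*u/3) ≤ Real.exp (2*v/3) := by
    intro u v
    rw [Real.exp_le_exp]
    constructor <;> intro h <;> linarith
  have hordlt : ∀ u v : ℝ, u < v ↔ Real.exp (2*u/3) < Real.exp (2*v/3) := by
    intro u v
    rw [Real.exp_lt_exp]
    constructor <;> intro h <;> linarith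
  have hMa : Ma (1/3) = M := Ma13
  have hfz : fab (1/3) z = (t^2 - t)/2 := fab_form z
  have hLa_le : La (1/3) ≤ fab (1/3) z := by
    rw [La13, hfz]; nlinarith [sq_nonneg (t - 1/2)]
  have hfy : fab (1/3) y = fab (1/3) z := by
    rw [fab_form, fab_form, hy_exp]; ring
  -- part 2
  have part2 : Real.sinh (y / 3) * Real.exp y = Real.sinh (z / 3) * Real.exp z := by
    have h1 := sinh_form y
    have h2 := sinh_form z
    rw [show y/3 = (1/3:ℝ)*y by ring, show z/3 = (1/3:ℝ)*z by ring, h1, h2, hy_exp]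
    ring
  -- parts 3, 4
  have part3 : z ≤ M → M ≤ y := by
    intro h
    rw [hord z M, hM_exp] at h
    rw [hord M y, hM_exp, hy_exp]
    linarith
  have part4 : M ≤ z → y ≤ M := by
    intro h
    rw [hord M z, hM_exp] at h
    rw [hord y M, hM_exp, hy_exp]
    linarith
  refine ⟨?_, part2, part3, part4⟩
  by_cases hcase : z < Ma (1/3)
  · rw [if_pos hcase]
    obtain ⟨hge, heq⟩ := hpsi0 (fab (1/3) z) hLa_le
    have hzM : Real.exp (2*z/3) < 1/2 := by
      rw [← hM_exp]; exact (hordlt z M).mp (hMa ▸ hcase)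
    have hyM : 1/2 ≤ Real.exp (2*y/3) := by rw [hy_exp]; linarith
    have hpM : 1/2 ≤ Real.exp (2*(psi0 (fab (1/3) z))/3) := by
      rw [← hM_exp]; exact (hord M _).mp (hMa ▸ hge)
    apply inj13
    · have h1 := fab_form (psi0 (fab (1/3) z))
      rw [heq] at h1
      have h2 := fab_form y
      rw [hfy] at h2
      linarith
    · left; exact ⟨hpM, hyM⟩
  · rw [if_neg hcase]
    push_neg at hcase
    have hfzneg : fab (1/3) z < 0 := by rw [hfz]; nlinarith
    obtain ⟨hle, heq⟩ := hpsi1 (fab (1/3) z) hLa_le hfzneg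
    have hzM : 1/2 ≤ Real.exp (2*z/3) := by
      rw [← hM_exp]; exact (hord M z).mp (hMa ▸ hcase)
    have hyM : Real.exp (2*y/3) ≤ 1/2 := by rw [hy_exp]; linarith
    have hpM : Real.exp (2*(psi1 (fab (1/3) z))/3) ≤ 1/2 := by
      rw [← hM_exp]; exact (hord _ M).mp (hMa ▸ hle)
    apply inj13
    · have h1 := fab_form (psi1 (fab (1/3) z))
      rw [heq] at h1
      have h2 := fab_form y
      rw [hfy] at h2
      linarith
    · right; exact ⟨hpM, hyM⟩
end

section
/- For a = 1/2 (so M_{1/2} = −log 3 and L_{1/2} = −√3/9): (i) for −√3/9 < x < √3/9 the number w₀ = 2·log((2/√3)·cos(arccos(3√3·x)/3)) satisfies w₀ ≥ M_{1/2} and sinh(w₀/2)·e^{w₀} = x, i.e. ψ₀(1/2,x) = w₀; (ii) for −√3/9 < x < 0 the number w₋ = 2·log((2/√3)·cos((arccos(3√3·x) + 4π)/3)) satisfies w₋ ≤ M_{1/2} and sinh(w₋/2)·e^{w₋} = x, i.e. ψ₋₁(1/2,x) = w₋. -/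
lemma sq_sqrt3 : Real.sqrt 3 ^ 2 = 3 := Real.sq_sqrt (by norm_num)

lemma sqrt3_pos : (0:ℝ) < Real.sqrt 3 := Real.sqrt_pos.mpr (by norm_num)

lemma Ma_half : Ma (1/2) = -Real.log 3 := by
  unfold Ma
  rw [show ((1:ℝ) - 1/2) / (1 + 1/2) = (3:ℝ)⁻¹ by norm_num, Real.log_inv]
  ring

lemma La_half : La (1/2) = -(Real.sqrt 3 / 9) := by
  unfold La
  rw [show (1:ℝ) - (1/2)^2 = 3/4 by norm_num,
    show ((1:ℝ) - 1/2) / (1 + 1/2) = (1/3 : ℝ) by norm_num,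
    show (1:ℝ) / (2 * (1/2)) = 1 by norm_num]
  have h4 : Real.sqrt (3/4) = Real.sqrt 3 / 2 := by
    rw [Real.sqrt_div (by norm_num : (0:ℝ) ≤ 3) 4,
      show (4:ℝ) = 2^2 by norm_num, Real.sqrt_sq (by norm_num : (0:ℝ) ≤ 2)]
  rw [h4, Real.rpow_one]
  have sp := sqrt3_pos
  have s3 := sq_sqrt3
  field_simp
  nlinarith [s3, sp]

/-- `fab (1/2) w` in terms of `t = exp (w/2)`. -/
lemma fab_half (w : ℝ) :
    fab (1/2) w = ((Real.exp (w/2))^3 - Real.exp (w/2)) / 2 := by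
  have ht : (0:ℝ) < Real.exp (w/2) := Real.exp_pos _
  have hw : Real.exp w = Real.exp (w/2) ^ 2 := by
    rw [sq, ← Real.exp_add, add_halves]
  unfold fab
  rw [show (1/2 : ℝ) * w = w/2 by ring, Real.sinh_eq, hw]
  have : Real.exp (-(w/2)) = (Real.exp (w/2))⁻¹ := by
    rw [Real.exp_neg]
  rw [this]
  field_simp

lemma inj_up {t₁ t₂ : ℝ} (h1 : 1 ≤ 3 * t₁^2) (h2 : 1 ≤ 3 * t₂^2)
    (hp1 : 0 < t₁) (hp2 : 0 < t₂)
    (h : (t₁^3 - t₁)/2 = (t₂^3 - t₂)/2) : t₁ = t₂ := by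
  have hprod : 1 ≤ 3 * (t₁ * t₂) := by nlinarith [mul_pos hp1 hp2]
  rcases lt_trichotomy t₁ t₂ with hlt | heq | hgt
  · exfalso
    nlinarith [hprod, sub_pos.mpr hlt, pow_pos (sub_pos.mpr hlt) 3]
  · exact heq
  · exfalso
    nlinarith [hprod, sub_pos.mpr hgt, pow_pos (sub_pos.mpr hgt) 3]

lemma inj_down {t₁ t₂ : ℝ} (h1 : 3 * t₁^2 ≤ 1) (h2 : 3 * t₂^2 ≤ 1)
    (hp1 : 0 < t₁) (hp2 : 0 < t₂)
    (h : (t₁^3 - t₁)/2 = (t₂^3 - t₂)/2) : t₁ = t₂ := by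
  have hprod : 3 * (t₁ * t₂) ≤ 1 := by nlinarith [mul_pos hp1 hp2]
  rcases lt_trichotomy t₁ t₂ with hlt | heq | hgt
  · exfalso
    have h11 : 3 * t₁^2 < 1 := by nlinarith
    nlinarith [hprod, sub_pos.mpr hlt, h11]
  · exact heq
  · exfalso
    have h22 : 3 * t₂^2 < 1 := by nlinarith
    nlinarith [hprod, sub_pos.mpr hgt, h22]

/-- key: if `c > 0` and `w = 2 log c`, then `exp (w/2) = c`. -/
lemma exp_half_two_log {c : ℝ} (hc : 0 < c) : Real.exp ((2 * Real.log c)/2) = c := by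
  rw [show (2 * Real.log c)/2 = Real.log c by ring, Real.exp_log hc]

/-- Explicit trigonometric formulas for the branches at `a = 1/2`
(where `M_{1/2} = −log 3` and `L_{1/2} = −√3/9`). -/
theorem stmt_10 (psi0 psi1 : ℝ → ℝ)
    (hpsi0 : ∀ x, La (1/2) ≤ x → Ma (1/2) ≤ psi0 x ∧ fab (1/2) (psi0 x) = x)
    (hpsi1 : ∀ x, La (1/2) ≤ x → x < 0 → psi1 x ≤ Ma (1/2) ∧ fab (1/2) (psi1 x) = x) :
    (∀ x : ℝ, -(Real.sqrt 3 / 9) < x → x < Real.sqrt 3 / 9 →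
      let w0 : ℝ := 2 * Real.log ((2 / Real.sqrt 3) *
        Real.cos (Real.arccos (3 * Real.sqrt 3 * x) / 3))
      psi0 x = w0 ∧ -Real.log 3 ≤ w0 ∧ Real.sinh (w0 / 2) * Real.exp w0 = x) ∧
    (∀ x : ℝ, -(Real.sqrt 3 / 9) < x → x < 0 →
      let wm : ℝ := 2 * Real.log ((2 / Real.sqrt 3) *
        Real.cos ((Real.arccos (3 * Real.sqrt 3 * x) + 4 * Real.pi) / 3))
      psi1 x = wm ∧ wm ≤ -Real.log 3 ∧ Real.sinh (wm / 2) * Real.exp wm = x) := by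
  have s3 := sq_sqrt3
  have sp := sqrt3_pos
  constructor
  · intro x hx1 hx2
    intro w0
    have hy1 : (-1:ℝ) ≤ 3 * Real.sqrt 3 * x := by nlinarith
    have hy2 : 3 * Real.sqrt 3 * x ≤ 1 := by nlinarith
    set θ : ℝ := Real.arccos (3 * Real.sqrt 3 * x) / 3 with hθ
    have hθ0 : 0 ≤ θ := by
      have := Real.arccos_nonneg (3 * Real.sqrt 3 * x); positivity
    have hθpi : θ ≤ Real.pi / 3 := by
      have := Real.arccos_le_pi (3 * Real.sqrt 3 * x); rw [hθ]; linarith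
    have hu : (1:ℝ)/2 ≤ Real.cos θ := by
      have := Real.cos_le_cos_of_nonneg_of_le_pi hθ0
        (by linarith [Real.pi_pos] : Real.pi/3 ≤ Real.pi) hθpi
      rwa [Real.cos_pi_div_three] at this
    set c : ℝ := (2 / Real.sqrt 3) * Real.cos θ with hc
    have hcpos : 0 < c := by
      apply mul_pos (by positivity); linarith
    have hc13 : 1 ≤ 3 * c^2 := by
      rw [hc, mul_pow, div_pow, s3]
      nlinarith
    have htriple : Real.cos (3 * θ) = 3 * Real.sqrt 3 * x := by
      rw [hθ, show 3 * (Real.arccos (3 * Real.sqrt 3 * x) / 3) =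
        Real.arccos (3 * Real.sqrt 3 * x) by ring, Real.cos_arccos hy1 hy2]
    have hval : (c^3 - c)/2 = x := by
      have h3 : 4 * Real.cos θ ^ 3 - 3 * Real.cos θ = 3 * Real.sqrt 3 * x := by
        rw [← Real.cos_three_mul, htriple]
      rw [hc]
      have hs : Real.sqrt 3 ≠ 0 := ne_of_gt sp
      field_simp
      linear_combination h3 +
        (-Real.cos θ - Real.sqrt 3*x) * s3
    have hw0 : w0 = 2 * Real.log c := rfl
    have hexp : Real.exp (w0/2) = c := by rw [hw0]; exact exp_half_two_log hcpos
    have hfabw0 : fab (1/2) w0 = x := by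
      rw [fab_half, hexp, hval]
    have hthird : Real.sinh (w0 / 2) * Real.exp w0 = x := by
      have := hfabw0
      unfold fab at this
      rwa [show (1/2 : ℝ) * w0 = w0/2 by ring] at this
    have hge : -Real.log 3 ≤ w0 := by
      rw [hw0]
      have h1 : (3:ℝ)⁻¹ ≤ c^2 := by nlinarith
      have h2 := Real.log_le_log (by norm_num : (0:ℝ) < 3⁻¹) h1
      rw [Real.log_inv, Real.log_pow] at h2
      push_cast at h2
      linarith
    refine ⟨?_, hge, hthird⟩
    · -- psi0 x = w0
      have hLa : La (1/2) ≤ x := by rw [La_half]; linarith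
      obtain ⟨hM, hf⟩ := hpsi0 x hLa
      rw [Ma_half] at hM
      -- t1 = exp (psi0 x / 2)
      have ht1 : 1 ≤ 3 * (Real.exp (psi0 x / 2))^2 := by
        have : Real.exp (-Real.log 3) ≤ Real.exp (psi0 x) :=
          Real.exp_le_exp.mpr hM
        rw [Real.exp_neg, Real.exp_log (by norm_num : (0:ℝ) < 3)] at this
        have h2 : Real.exp (psi0 x) = Real.exp (psi0 x / 2)^2 := by
          rw [sq, ← Real.exp_add, add_halves]
        rw [h2] at this
        linarith
      have ht2 : 1 ≤ 3 * c^2 := hc13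
      have heq : ((Real.exp (psi0 x / 2))^3 - Real.exp (psi0 x / 2))/2
          = (c^3 - c)/2 := by
        have := hf
        rw [fab_half] at this
        rw [this, hval]
      have := inj_up ht1 ht2 (Real.exp_pos _) hcpos heq
      have : psi0 x / 2 = Real.log c := by
        have h' : Real.exp (psi0 x / 2) = Real.exp (Real.log c) := by
          rw [this, Real.exp_log hcpos]
        exact Real.exp_injective h'
      rw [hw0]; linarith
  · intro x hx1 hx0
    intro wm
    have hy1 : (-1:ℝ) < 3 * Real.sqrt 3 * x := by nlinarith
    have hy0 : 3 * Real.sqrt 3 * x < 0 := by nlinarith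
    have hy2 : 3 * Real.sqrt 3 * x ≤ 1 := by nlinarith
    set A : ℝ := Real.arccos (3 * Real.sqrt 3 * x) with hA
    have hA1 : Real.pi / 2 < A := by
      rw [hA, Real.arccos_eq_pi_div_two_sub_arcsin]
      have : Real.arcsin (3 * Real.sqrt 3 * x) < 0 := by
        have := Real.arcsin_pos.mpr (show (0:ℝ) < -(3 * Real.sqrt 3 * x) by linarith)
        rw [Real.arcsin_neg] at this
        linarith
      linarith
    have hA2 : A < Real.pi := by
      rw [hA]
      have h := Real.arccos_le_pi (3 * Real.sqrt 3 * x)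
      rcases h.lt_or_eq with h | h
      · exact h
      · exfalso
        have : Real.cos (Real.arccos (3 * Real.sqrt 3 * x)) = 3 * Real.sqrt 3 * x :=
          Real.cos_arccos (le_of_lt hy1) hy2
        rw [h, Real.cos_pi] at this
        linarith
    set φ : ℝ := (A + 4 * Real.pi) / 3 with hφ
    -- cos φ = cos (2π - φ), with 2π - φ ∈ (π/3, π/2)
    have hcosφ : Real.cos φ = Real.cos (2 * Real.pi - φ) := by
      rw [← Real.cos_neg (2 * Real.pi - φ), show -(2 * Real.pi - φ) = φ - 2 * Real.pi by ring,
        Real.cos_sub_two_pi]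
    have hψ1 : Real.pi / 3 < 2 * Real.pi - φ := by rw [hφ]; linarith
    have hψ2 : 2 * Real.pi - φ < Real.pi / 2 := by rw [hφ]; linarith
    have hu1 : 0 < Real.cos φ := by
      rw [hcosφ]
      exact Real.cos_pos_of_mem_Ioo ⟨by linarith [Real.pi_pos], hψ2⟩
    have hu2 : Real.cos φ ≤ 1/2 := by
      rw [hcosφ]
      have := Real.cos_le_cos_of_nonneg_of_le_pi
        (by positivity : (0:ℝ) ≤ Real.pi/3) (by linarith : 2 * Real.pi - φ ≤ Real.pi)
        (le_of_lt hψ1)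
      rwa [Real.cos_pi_div_three] at this
    set c : ℝ := (2 / Real.sqrt 3) * Real.cos φ with hc
    have hcpos : 0 < c := mul_pos (by positivity) hu1
    have hc13 : 3 * c^2 ≤ 1 := by
      rw [hc, mul_pow, div_pow, s3]
      nlinarith
    have htriple : Real.cos (3 * φ) = 3 * Real.sqrt 3 * x := by
      rw [hφ, show 3 * ((A + 4 * Real.pi)/3) = (A + 2 * Real.pi) + 2 * Real.pi by ring,
        Real.cos_add_two_pi, Real.cos_add_two_pi, hA, Real.cos_arccos (le_of_lt hy1) hy2]
    have hval : (c^3 - c)/2 = x := by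
      have h3 : 4 * Real.cos φ ^ 3 - 3 * Real.cos φ = 3 * Real.sqrt 3 * x := by
        rw [← Real.cos_three_mul, htriple]
      rw [hc]
      have hs : Real.sqrt 3 ≠ 0 := ne_of_gt sp
      field_simp
      linear_combination h3 +
        (-Real.cos φ - Real.sqrt 3*x) * s3
    have hwm : wm = 2 * Real.log c := rfl
    have hexp : Real.exp (wm/2) = c := by rw [hwm]; exact exp_half_two_log hcpos
    have hfabwm : fab (1/2) wm = x := by rw [fab_half, hexp, hval]
    have hthird : Real.sinh (wm / 2) * Real.exp wm = x := by
      have := hfabwm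
      unfold fab at this
      rwa [show (1/2 : ℝ) * wm = wm/2 by ring] at this
    have hle : wm ≤ -Real.log 3 := by
      rw [hwm]
      have h1 : c^2 ≤ (3:ℝ)⁻¹ := by nlinarith
      have h2 := Real.log_le_log (by positivity) h1
      rw [Real.log_inv, Real.log_pow] at h2
      push_cast at h2
      linarith
    refine ⟨?_, hle, hthird⟩
    · have hLa : La (1/2) ≤ x := by rw [La_half]; linarith
      obtain ⟨hM, hf⟩ := hpsi1 x hLa hx0
      rw [Ma_half] at hM
      have ht1 : 3 * (Real.exp (psi1 x / 2))^2 ≤ 1 := by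
        have : Real.exp (psi1 x) ≤ Real.exp (-Real.log 3) :=
          Real.exp_le_exp.mpr hM
        rw [Real.exp_neg, Real.exp_log (by norm_num : (0:ℝ) < 3)] at this
        have h2 : Real.exp (psi1 x) = Real.exp (psi1 x / 2)^2 := by
          rw [sq, ← Real.exp_add, add_halves]
        rw [h2] at this
        linarith
      have heq : ((Real.exp (psi1 x / 2))^3 - Real.exp (psi1 x / 2))/2
          = (c^3 - c)/2 := by
        have := hf
        rw [fab_half] at this
        rw [this, hval]
      have := inj_down ht1 hc13 (Real.exp_pos _) hcpos heq
      have : psi1 x / 2 = Real.log c := by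
        have h' : Real.exp (psi1 x / 2) = Real.exp (Real.log c) := by
          rw [this, Real.exp_log hcpos]
        exact Real.exp_injective h'
      rw [hwm]; linarith
end

section
/- Fix 0 < a < 1 and for n ≥ 1 set I_a(n) = (1/2)·((1−a)/(1+a))^{n(1−a)/(2a)}·( ((1−a)/(1+a))^n − 1 ). Then for every n ≥ 1: (i) the n-th derivative of w ↦ sinh(a·w)·e^w vanishes at w = n·M_a, i.e. (∂ⁿ/∂wⁿ) f(a,w) = 0 at w = n·M_a; (ii) f(a, n·M_a) = I_a(n); consequently (iii) ψ₋₁(a, I_a(n)) = n·M_a. -/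
/-- `I_a(n) = (1/2)·((1−a)/(1+a))^{n(1−a)/(2a)}·(((1−a)/(1+a))^n − 1)`. -/
noncomputable def Ia (a : ℝ) (n : ℕ) : ℝ :=
  (1 / 2) * ((1 - a) / (1 + a)) ^ ((n : ℝ) * (1 - a) / (2 * a)) *
    (((1 - a) / (1 + a)) ^ n - 1)

lemma iterExp (a : ℝ) (n : ℕ) :
    iteratedDeriv n (fun w : ℝ => (Real.exp ((1+a)*w) - Real.exp ((1-a)*w))/2)
    = fun w => ((1+a)^n * Real.exp ((1+a)*w) - (1-a)^n * Real.exp ((1-a)*w))/2 := by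
  induction n with
  | zero => simp
  | succ n ih =>
    rw [iteratedDeriv_succ, ih]
    funext w
    have h1 : HasDerivAt (fun w : ℝ => Real.exp ((1+a)*w)) ((1+a) * Real.exp ((1+a)*w)) w := by
      simpa [mul_comm] using ((hasDerivAt_id w).const_mul (1+a)).exp
    have h2 : HasDerivAt (fun w : ℝ => Real.exp ((1-a)*w)) ((1-a) * Real.exp ((1-a)*w)) w := by
      simpa [mul_comm] using ((hasDerivAt_id w).const_mul (1-a)).exp
    have := (((h1.const_mul ((1+a)^n)).sub (h2.const_mul ((1-a)^n))).div_const 2).deriv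
    simp only [Pi.sub_apply] at this
    rw [this]; ring

lemma fab_eq (a : ℝ) : (fun w : ℝ => Real.sinh (a * w) * Real.exp w)
    = fun w => (Real.exp ((1+a)*w) - Real.exp ((1-a)*w))/2 := by
  funext w
  rw [Real.sinh_eq, div_mul_eq_mul_div, sub_mul, ← Real.exp_add, ← Real.exp_add]
  ring_nf


/-- For `n ≥ 1`: the `n`-th derivative of `f(a,·)` vanishes at `n·M_a`,
`f(a, n·M_a) = I_a(n)`, and consequently `ψ₋₁(a, I_a(n)) = n·M_a`. -/
theorem stmt_11 (a : ℝ) (ha0 : 0 < a) (ha1 : a < 1) (psi1 : ℝ → ℝ)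
    (hpsi1 : ∀ x, La a ≤ x → x < 0 → psi1 x ≤ Ma a ∧ fab a (psi1 x) = x) :
    ∀ n : ℕ, 1 ≤ n →
      iteratedDeriv n (fun w : ℝ => Real.sinh (a * w) * Real.exp w) ((n : ℝ) * Ma a) = 0 ∧
      fab a ((n : ℝ) * Ma a) = Ia a n ∧
      psi1 (Ia a n) = (n : ℝ) * Ma a := by
  have h1a : (0:ℝ) < 1 + a := by linarith
  have h1ma : (0:ℝ) < 1 - a := by linarith
  set r : ℝ := (1 - a) / (1 + a) with hrdef
  have hr0 : 0 < r := div_pos h1ma h1a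
  have hr1 : r < 1 := (div_lt_one h1a).mpr (by linarith)
  set L : ℝ := Real.log r with hLdef
  have hL : L < 0 := Real.log_neg hr0 hr1
  have hexpL : Real.exp L = r := Real.exp_log hr0
  have hMaval : Ma a = L / (2 * a) := by rw [Ma]; ring
  have hMa_neg : Ma a < 0 := by
    rw [hMaval]; exact div_neg_of_neg_of_pos hL (by linarith)
  have hra : (1 + a) * r = 1 - a := by rw [hrdef]; field_simp
  -- strict antitonicity on Iic (Ma a)
  have hanti : StrictAntiOn (fab a) (Set.Iic (Ma a)) := by
    apply strictAntiOn_of_deriv_neg (convex_Iic _)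
    · have heq : fab a = fun w => Real.sinh (a * w) * Real.exp w := rfl
      rw [heq]
      exact ((Real.continuous_sinh.comp (continuous_const.mul continuous_id)).mul
        Real.continuous_exp).continuousOn
    · intro x hx
      rw [interior_Iic, Set.mem_Iio] at hx
      have hd : HasDerivAt (fab a)
          (Real.cosh (a*x) * (a * 1) * Real.exp x + Real.sinh (a*x) * Real.exp x) x :=
        (((hasDerivAt_id x).const_mul a).sinh).mul (Real.hasDerivAt_exp x)
      rw [hd.deriv, Real.cosh_eq, Real.sinh_eq, Real.exp_neg]
      set u := Real.exp (a * x) with hudef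
      have hu0 : 0 < u := Real.exp_pos _
      have hex : 0 < Real.exp x := Real.exp_pos x
      have hur : u * u < r := by
        have h2 : 2 * (a * x) < L := by
          rw [hMaval, lt_div_iff₀ (by linarith : (0:ℝ) < 2*a)] at hx
          nlinarith
        calc u * u = Real.exp (2 * (a * x)) := by rw [← Real.exp_add]; ring_nf
        _ < Real.exp L := Real.exp_lt_exp.mpr h2
        _ = r := hexpL
      have heq2 : (u + u⁻¹)/2 * (a*1) * Real.exp x + (u - u⁻¹)/2 * Real.exp x
          = ((1+a)*(u*u) - (1-a)) * Real.exp x / (2*u) := by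
        field_simp
        ring
      rw [heq2]
      apply div_neg_of_neg_of_pos _ (by linarith)
      apply mul_neg_of_neg_of_pos _ hex
      nlinarith [mul_lt_mul_of_pos_left hur h1a]
  -- fab at Ma equals La
  have haM : a * Ma a = L / 2 := by rw [hMaval]; field_simp
  have hsL : Real.exp (L/2) ^ 2 = r := by
    rw [← Real.exp_nat_mul]
    push_cast
    rw [show (2:ℝ)*(L/2) = L by ring, hexpL]
  have hsqr : Real.sqrt r = Real.exp (L/2) := by
    rw [← hsL, Real.sqrt_sq (Real.exp_pos _).le]
  have hp : Real.sqrt (1-a) ^ 2 = 1-a := Real.sq_sqrt h1ma.le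
  have hq : Real.sqrt (1+a) ^ 2 = 1+a := Real.sq_sqrt h1a.le
  have hp0 : 0 < Real.sqrt (1-a) := Real.sqrt_pos.mpr h1ma
  have hq0 : 0 < Real.sqrt (1+a) := Real.sqrt_pos.mpr h1a
  have hspq : Real.exp (L/2) = Real.sqrt (1-a) / Real.sqrt (1+a) := by
    rw [← hsqr, hrdef, Real.sqrt_div h1ma.le]
  have hrpMa : ((1-a)/(1+a) : ℝ) ^ ((1:ℝ)/(2*a)) = Real.exp (Ma a) := by
    rw [← hrdef, Real.rpow_def_of_pos hr0, ← hLdef, hMaval]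
    congr 1; ring
  have hfabMa : fab a (Ma a) = La a := by
    rw [fab, La, show (1:ℝ)-a^2 = (1-a)*(1+a) by ring, Real.sqrt_mul h1ma.le, hrpMa, haM,
      Real.sinh_eq, Real.exp_neg, hspq]
    have hE := Real.exp_pos (Ma a)
    field_simp
    nlinarith [hp, hq, hE]
  intro n hn
  have hn1 : (1:ℝ) ≤ (n:ℝ) := by exact_mod_cast hn
  have haMa : a * ((n:ℝ) * Ma a) = (n:ℝ) * L / 2 := by
    rw [hMaval]; field_simp
  set X : ℝ := Real.exp ((n:ℝ) * L / 2) with hXdef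
  set Y : ℝ := Real.exp ((n:ℝ) * Ma a) with hYdef
  have hX0 : 0 < X := Real.exp_pos _
  have hY0 : 0 < Y := Real.exp_pos _
  have hX2 : X * X = r ^ n := by
    rw [hXdef, ← Real.exp_add, ← hexpL, ← Real.exp_nat_mul]; ring_nf
  have hXY : X * Y = Real.exp ((1+a) * ((n:ℝ) * Ma a)) := by
    rw [hXdef, hYdef, ← Real.exp_add, hMaval]; congr 1; field_simp; ring
  have hYX : Y * X⁻¹ = Real.exp ((1-a) * ((n:ℝ) * Ma a)) := by
    rw [hXdef, hYdef, ← Real.exp_neg, ← Real.exp_add, hMaval]; congr 1; field_simp; ring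
  have hrpow : r ^ ((n : ℝ) * (1 - a) / (2 * a)) = Y * X⁻¹ := by
    rw [Real.rpow_def_of_pos hr0, hYX, hMaval, ← hLdef]; congr 1; field_simp
  have part2 : fab a ((n:ℝ) * Ma a) = Ia a n := by
    rw [fab, Ia, Real.sinh_eq, haMa, Real.exp_neg, ← hXdef, ← hYdef, ← hrdef, hrpow, ← hX2]
    field_simp
  refine ⟨?_, part2, ?_⟩
  · rw [fab_eq, iterExp]
    beta_reduce
    rw [← hXY, ← hYX]
    have hkey : (1+a)^n * (X*X) = (1-a)^n := by rw [hX2, ← mul_pow, hra]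
    have hpow : (1+a)^n * (X*Y) = (1-a)^n * (Y*X⁻¹) := by
      rw [← hkey]; field_simp
    rw [hpow]; ring
  · have hIaneg : Ia a n < 0 := by
      have hp1 : r ^ n < 1 := pow_lt_one₀ hr0.le hr1 (by omega)
      have hp2 : 0 < r ^ ((n:ℝ)*(1-a)/(2*a)) := Real.rpow_pos_of_pos hr0 _
      rw [Ia, ← hrdef]
      exact mul_neg_of_pos_of_neg (mul_pos (by norm_num) hp2) (by linarith)
    have hnMa_le : (n:ℝ) * Ma a ≤ Ma a := by
      have h := mul_le_mul_of_nonpos_right hn1 hMa_neg.le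
      linarith
    have hmono : fab a (Ma a) ≤ fab a ((n:ℝ) * Ma a) := by
      rcases eq_or_lt_of_le hnMa_le with h | h
      · rw [h]
      · exact (hanti (Set.mem_Iic.mpr hnMa_le) (Set.mem_Iic.mpr le_rfl) h).le
    have hLaIa : La a ≤ Ia a n := by rw [← hfabMa, ← part2]; exact hmono
    obtain ⟨hple, hpeq⟩ := hpsi1 _ hLaIa hIaneg
    have hfe : fab a (psi1 (Ia a n)) = fab a ((n:ℝ)*Ma a) := by rw [hpeq, part2]
    exact hanti.injOn (Set.mem_Iic.mpr hple) (Set.mem_Iic.mpr hnMa_le) hfe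
end

section
/- Set b(a) = |a − 1/3|. (A) For every 0 < a < 1/3 and every y with 0 ≤ y ≤ b(a): (i) e^{2ay} − e^{(a−1)y} − (a+1)·y ≤ 0, and (ii) e^{2ay} − e^{(a−1)y} − (a+1)·y + (1/2)·(−3a² − 2a + 1)·y² ≥ 0. (B) For every 1/3 < a < 1 and every y with 0 ≤ y ≤ b(a): (1+a)·y ≤ e^{2ay} − e^{(a−1)y} ≤ 3·(1+a)·y. -/
open Real Finset

private lemma aux_exp43 : Real.exp (4/3 : ℝ) ≤ 4 := by
  have h1 : Real.exp 1 < 2.7182818286 := Real.exp_one_lt_d9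
  have h2 : Real.exp (4/3 : ℝ) ^ 3 = Real.exp 1 ^ 4 := by
    rw [← Real.exp_nat_mul, ← Real.exp_nat_mul]; norm_num
  have h3 : Real.exp 1 ^ 4 < 64 := by
    calc Real.exp 1 ^ 4 < 2.7182818286 ^ 4 :=
          pow_lt_pow_left₀ h1 (Real.exp_pos 1).le (by norm_num)
      _ < 64 := by norm_num
  by_contra h
  push_neg at h
  have h5 : (4:ℝ) ^ 3 < Real.exp (4/3:ℝ) ^ 3 := pow_lt_pow_left₀ h (by norm_num) (by norm_num)
  rw [h2] at h5
  norm_num at h5 h3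
  linarith

private lemma aux_lin {t : ℝ} (ht : 0 ≤ t) (ht' : t ≤ 4/3) : Real.exp t ≤ 1 + 3*t := by
  have hs : (0:ℝ) ≤ (3/4)*t := by linarith
  have := convexOn_exp.2 (Set.mem_univ (0:ℝ)) (Set.mem_univ (4/3:ℝ))
    (by linarith : (0:ℝ) ≤ 1 - (3/4)*t) hs (by ring)
  simp only [smul_eq_mul, mul_zero, zero_add, Real.exp_zero, mul_one] at this
  have ht2 : (3/4*t) * (4/3) = t := by ring
  rw [ht2] at this
  nlinarith [aux_exp43]

private lemma aux_cub_up {x : ℝ} (h0 : 0 ≤ x) (h1 : x ≤ 1) :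
    Real.exp x ≤ 1 + x + x^2/2 + (2/9)*x^3 := by
  have h := Real.exp_bound (n := 3) (x := x) (by rw [abs_of_nonneg h0]; exact h1) (by norm_num)
  have hs : ∑ m ∈ range 3, x ^ m / m.factorial = 1 + x + x^2/2 := by
    simp [Finset.sum_range_succ, Nat.factorial]
  rw [hs, abs_of_nonneg h0] at h
  have h2 := (abs_sub_le_iff.1 h).1
  norm_num [Nat.factorial] at h2 ⊢
  linarith

private lemma aux_cub_low {x : ℝ} (h0 : 0 ≤ x) :
    1 + x + x^2/2 + x^3/6 ≤ Real.exp x := by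
  have h := Real.sum_le_exp_of_nonneg h0 4
  have hs : ∑ m ∈ range 4, x ^ m / m.factorial = 1 + x + x^2/2 + x^3/6 := by
    simp [Finset.sum_range_succ, Nat.factorial]
  rwa [hs] at h

private lemma aux_quart {x : ℝ} (h0 : x ≤ 0) (h1 : -1 ≤ x) :
    1 + x + x^2/2 + x^3/6 - (5/96)*x^4 ≤ Real.exp x ∧
    Real.exp x ≤ 1 + x + x^2/2 + x^3/6 + (5/96)*x^4 := by
  have h := Real.exp_bound (n := 4) (x := x) (by rw [abs_of_nonpos h0]; linarith) (by norm_num)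
  have hs : ∑ m ∈ range 4, x ^ m / m.factorial = 1 + x + x^2/2 + x^3/6 := by
    simp [Finset.sum_range_succ, Nat.factorial]
  rw [hs] at h
  have h4 : |x| ^ 4 = x ^ 4 := by rw [abs_of_nonpos h0]; ring
  rw [h4] at h
  have ha := (abs_sub_le_iff.1 h).1
  have hb := (abs_sub_le_iff.1 h).2
  norm_num [Nat.factorial] at ha hb ⊢
  constructor <;> nlinarith

private lemma aux_cub_neg {x : ℝ} (h0 : x ≤ 0) (h1 : -1 ≤ x) :
    Real.exp x ≤ 1 + x + x^2/2 + (2/9)*(-x)^3 := by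
  have h := Real.exp_bound (n := 3) (x := x) (by rw [abs_of_nonpos h0]; linarith) (by norm_num)
  have hs : ∑ m ∈ range 3, x ^ m / m.factorial = 1 + x + x^2/2 := by
    simp [Finset.sum_range_succ, Nat.factorial]
  rw [hs, abs_of_nonpos h0] at h
  have h2 := (abs_sub_le_iff.1 h).1
  norm_num [Nat.factorial] at h2 ⊢
  nlinarith

set_option maxHeartbeats 1000000 in
/-- Elementary exponential inequalities on `0 ≤ y ≤ b(a) = |a − 1/3|`, for
`0 < a < 1/3` and for `1/3 < a < 1`. -/
theorem stmt_14 :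
    (∀ a : ℝ, 0 < a → a < 1/3 → ∀ y : ℝ, 0 ≤ y → y ≤ |a - 1/3| →
      Real.exp (2*a*y) - Real.exp ((a-1)*y) - (a+1)*y ≤ 0 ∧
      0 ≤ Real.exp (2*a*y) - Real.exp ((a-1)*y) - (a+1)*y
            + (1/2) * (-3*a^2 - 2*a + 1) * y^2) ∧
    (∀ a : ℝ, 1/3 < a → a < 1 → ∀ y : ℝ, 0 ≤ y → y ≤ |a - 1/3| →
      (1+a)*y ≤ Real.exp (2*a*y) - Real.exp ((a-1)*y) ∧
      Real.exp (2*a*y) - Real.exp ((a-1)*y) ≤ 3*(1+a)*y) := by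
  constructor
  · intro a ha ha' y hy hyb
    have hyb' : y ≤ 1/3 - a := by
      rwa [abs_of_neg (by linarith : a - 1/3 < 0), neg_sub] at hyb
    have hu0 : (0:ℝ) ≤ 2*a*y := by positivity
    have hu1 : 2*a*y ≤ 1 := by nlinarith
    have hv0 : (a-1)*y ≤ 0 := mul_nonpos_of_nonpos_of_nonneg (by linarith) hy
    have hv1 : -1 ≤ (a-1)*y := by nlinarith
    have hA := aux_cub_up hu0 hu1
    have hq := aux_quart hv0 hv1
    have hC := aux_cub_low hu0
    constructor
    · nlinarith [hA, hq.1, mul_nonneg (mul_nonneg hy hy) hy,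
        mul_nonneg (mul_nonneg (mul_nonneg hy hy) hy) hy,
        mul_nonneg (mul_nonneg hy hy) (by linarith : (0:ℝ) ≤ 1 - 3*a - 3*y),
        mul_nonneg (mul_nonneg (mul_nonneg hy hy) hy) ha.le,
        sq_nonneg (a*y), sq_nonneg y]
    · nlinarith [hC, hq.2, mul_nonneg (mul_nonneg hy hy) hy,
        mul_nonneg (mul_nonneg (mul_nonneg hy hy) hy) hy,
        mul_nonneg (mul_nonneg (mul_nonneg hy hy) hy) (by linarith : (0:ℝ) ≤ 1 - 3*(1-a)*y),
        mul_nonneg (mul_nonneg (mul_nonneg hy hy) hy) ha.le]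
  · intro a ha ha' y hy hyb
    have hyb' : y ≤ a - 1/3 := by
      rwa [abs_of_pos (by linarith : 0 < a - 1/3)] at hyb
    have hu0 : (0:ℝ) ≤ 2*a*y := by positivity
    have hv0 : (a-1)*y ≤ 0 := mul_nonpos_of_nonpos_of_nonneg (by linarith) hy
    have hv1 : -1 ≤ (a-1)*y := by nlinarith
    constructor
    · have hA := Real.quadratic_le_exp_of_nonneg hu0
      have hB := aux_cub_neg hv0 hv1
      nlinarith [mul_nonneg (mul_nonneg hy hy) hy,
        mul_nonneg (mul_nonneg hy hy) (by linarith : (0:ℝ) ≤ 3*a - 1 - 3*y),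
        mul_nonneg (mul_nonneg (mul_nonneg hy hy) hy) (by linarith : (0:ℝ) ≤ a)]
    · have ht0 : (0:ℝ) ≤ (1+a)*y := by positivity
      have ht1 : (1+a)*y ≤ 4/3 := by
        nlinarith [mul_nonneg (by linarith : (0:ℝ) ≤ 1+a) (by linarith : (0:ℝ) ≤ a - 1/3 - y),
          mul_nonneg (by linarith : (0:ℝ) ≤ 1-a) (by linarith : (0:ℝ) ≤ a + 5/3)]
      have hl := aux_lin ht0 ht1
      have h1 : 1 ≤ Real.exp ((1+a)*y) := Real.one_le_exp ht0
      have hvle : Real.exp ((a-1)*y) ≤ 1 := Real.exp_le_one_iff.2 hv0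
      have heq : Real.exp (2*a*y) = Real.exp ((a-1)*y) * Real.exp ((1+a)*y) := by
        rw [← Real.exp_add]; ring_nf
      nlinarith [mul_nonneg (by linarith : (0:ℝ) ≤ 1 - Real.exp ((a-1)*y))
        (by linarith : (0:ℝ) ≤ Real.exp ((1+a)*y) - 1)]
end

section
/- Fix 0 < a < 1. For every x > 0: (i) e^{−2ax} − e^{(−a−1)x} − (1−a)·x ≤ 0, and (ii) e^{−2ax} − e^{(−a−1)x} − (1−a)·x − (1/2)·(3a² − 2a − 1)·x² ≥ 0. -/
lemma exp_neg_le_quad {t : ℝ} (ht : 0 ≤ t) : Real.exp (-t) ≤ 1 - t + t^2/2 := by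
  have h : ∀ s ∈ Set.Ici (0:ℝ), 0 ≤ deriv (fun u => 1 - u + u^2/2 - Real.exp (-u)) s := by
    intro s hs
    have : deriv (fun u : ℝ => 1 - u + u^2/2 - Real.exp (-u)) s
        = -1 + s + Real.exp (-s) := by
      have h1 : HasDerivAt (fun u : ℝ => 1 - u + u^2/2 - Real.exp (-u))
          (-1 + s + Real.exp (-s)) s := by
        have he : HasDerivAt (fun u : ℝ => Real.exp (-u)) (-Real.exp (-s)) s := by
          have := (Real.hasDerivAt_exp (-s)).comp s (hasDerivAt_neg s)
          rw [show Real.exp (-s) * -1 = -Real.exp (-s) by ring] at this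
          exact this
        have hp : HasDerivAt (fun u : ℝ => 1 - u + u^2/2) (-1 + s) s := by
          have := ((((hasDerivAt_id s).const_sub 1).add
            ((hasDerivAt_pow 2 s).div_const 2)) : HasDerivAt (fun u : ℝ => 1 - u + u^2/2) _ s)
          rw [show (-1 + s) = -1 + ((2:ℕ):ℝ) * s^(2-1)/2 by norm_num]
          exact this
        have h2 : HasDerivAt (fun u : ℝ => 1 - u + u^2/2 - Real.exp (-u)) _ s := hp.sub he
        rw [sub_neg_eq_add] at h2
        exact h2
      exact h1.deriv
    rw [this]
    nlinarith [Real.add_one_le_exp (-s), Set.mem_Ici.mp hs]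
  have hmono : MonotoneOn (fun u : ℝ => 1 - u + u^2/2 - Real.exp (-u)) (Set.Ici 0) := by
    apply monotoneOn_of_deriv_nonneg (convex_Ici 0)
    · exact (Continuous.sub (by continuity) (by continuity)).continuousOn
    · intro s hs
      apply DifferentiableAt.differentiableWithinAt
      fun_prop
    · intro s hs
      exact h s (interior_subset hs)
  have := hmono (Set.self_mem_Ici) (Set.mem_Ici.mpr ht) ht
  simp at this
  linarith

/-- Elementary exponential inequalities for all `x > 0` and `0 < a < 1`. -/
theorem stmt_16 (a : ℝ) (ha0 : 0 < a) (ha1 : a < 1) :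
    ∀ x : ℝ, 0 < x →
      Real.exp (-2*a*x) - Real.exp ((-a-1)*x) - (1-a)*x ≤ 0 ∧
      0 ≤ Real.exp (-2*a*x) - Real.exp ((-a-1)*x) - (1-a)*x
            - (1/2) * (3*a^2 - 2*a - 1) * x^2 := by
  intro x hx
  set E1 := Real.exp (-2*a*x) with hE1def
  set E2 := Real.exp ((a-1)*x) with hE2def
  have hsplit : Real.exp ((-a-1)*x) = E1 * E2 := by
    rw [hE1def, hE2def, ← Real.exp_add]; ring_nf
  have hE1le : E1 ≤ 1 := Real.exp_le_one_iff.mpr (by nlinarith)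
  have hE1ge : 1 + (-2*a*x) ≤ E1 := by
    have := Real.add_one_le_exp (-2*a*x); rw [← hE1def] at this; linarith
  have hE1pos : 0 < E1 := Real.exp_pos _
  have hE2ge : 1 + (a-1)*x ≤ E2 := by
    have := Real.add_one_le_exp ((a-1)*x); rw [← hE2def] at this; linarith
  have ht : 0 ≤ (1-a)*x := by nlinarith
  have hE2le : E2 ≤ 1 - (1-a)*x + ((1-a)*x)^2/2 := by
    have := exp_neg_le_quad ht
    have heq : -((1-a)*x) = (a-1)*x := by ring
    rw [heq] at this
    exact this
  have hE2le1 : E2 ≤ 1 := Real.exp_le_one_iff.mpr (by nlinarith)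
  have hE2pos : 0 < E2 := Real.exp_pos _
  rw [hsplit]
  constructor
  · nlinarith [mul_nonneg (sub_nonneg.mpr hE1le) (sub_nonneg.mpr hE2le1)]
  · rcases le_or_gt 0 (1 - 2*a*x) with hc | hc
    · nlinarith [mul_nonneg (by linarith : (0:ℝ) ≤ E1 - (1 - 2*a*x)) (sub_nonneg.mpr hE2le1),
        mul_nonneg hc (by nlinarith : (0:ℝ) ≤ (1 - E2) - ((1-a)*x - ((1-a)*x)^2/2)),
        mul_nonneg (mul_nonneg ha0.le (by nlinarith : (0:ℝ) ≤ (1-a)^2)) (pow_pos hx 3).le]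
    · nlinarith [mul_nonneg (by linarith : (0:ℝ) ≤ E1 - (1 - 2*a*x)) (sub_nonneg.mpr hE2le1),
        mul_nonneg (by linarith : (0:ℝ) ≤ 2*a*x - 1) (by nlinarith : (0:ℝ) ≤ (1-a)*x - (1 - E2)),
        mul_nonneg (mul_nonneg (by linarith : (0:ℝ) ≤ 1-a) (by linarith : (0:ℝ) ≤ 1-a)) (sq_nonneg x)]
end

section
/- Fix 0 < a < 1. Then: (1) lim_{x→0⁻} ( ψ₋₁(a,x) − log(−2x)/(1−a) ) = 0, the limit taken over x in the domain [L_a, 0) of ψ₋₁(a,·); and (2) for every x with L_a ≤ x < 0, ψ₋₁(a,x) ≥ log(−2x)/(1−a) − log(1 − (−2x)^{2a/(1−a)}). -/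
open Real Filter Set

/-- Main facts about a point `w ≤ Ma a` with `fab a w = x < 0`. -/
lemma aux_main (a : ℝ) (ha0 : 0 < a) (ha1 : a < 1) (w x : ℝ)
    (hw : w ≤ Ma a) (hfw : fab a w = x) (hx : x < 0) :
    0 < 1 - Real.exp (2*a*w) ∧
    w - Real.log (-2*x) / (1-a) = -(Real.log (1 - Real.exp (2*a*w)) / (1-a)) ∧
    (1-a)*w ≤ Real.log ((-x)*((1+a)/a)) := by
  have h1a : (0:ℝ) < 1 - a := by linarith
  have hpa : (0:ℝ) < 1 + a := by linarith
  have hkey : Real.exp ((1-a)*w) - Real.exp ((1+a)*w) = -(2*x) := by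
    rw [← hfw]; unfold fab; rw [Real.sinh_eq]
    rw [show (1-a)*w = -(a*w) + w by ring, show (1+a)*w = a*w + w by ring,
        Real.exp_add, Real.exp_add]
    ring
  have hkey2 : Real.exp ((1-a)*w) * (1 - Real.exp (2*a*w)) = -(2*x) := by
    rw [mul_sub, mul_one, ← Real.exp_add, show (1-a)*w + 2*a*w = (1+a)*w by ring]
    exact hkey
  have hE : 0 < Real.exp ((1-a)*w) := Real.exp_pos _
  have ht : 0 < 1 - Real.exp (2*a*w) := by nlinarith [hkey2, hE]
  have hMa : Real.exp (2*a*(Ma a)) = (1-a)/(1+a) := by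
    unfold Ma
    rw [show 2*a*((1/(2*a))*Real.log ((1-a)/(1+a))) = Real.log ((1-a)/(1+a)) by
      field_simp]
    exact Real.exp_log (by positivity)
  have htb : 2*a/(1+a) ≤ 1 - Real.exp (2*a*w) := by
    have h2 : Real.exp (2*a*w) ≤ (1-a)/(1+a) := by
      rw [← hMa]
      exact Real.exp_le_exp.mpr (by nlinarith [hw, ha0])
    have : 2*a/(1+a) = 1 - (1-a)/(1+a) := by field_simp; ring
    linarith
  have hlog : (1-a)*w + Real.log (1 - Real.exp (2*a*w)) = Real.log (-(2*x)) := by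
    rw [← hkey2, Real.log_mul (Real.exp_ne_zero _) (ne_of_gt ht), Real.log_exp]
  refine ⟨ht, ?_, ?_⟩
  · have h' : Real.log (-2*x) = (1-a)*w + Real.log (1 - Real.exp (2*a*w)) := by
      rw [show -2*x = -(2*x) by ring, hlog]
    rw [h']; field_simp; ring
  · have h1 : Real.exp ((1-a)*w) * (2*a/(1+a)) ≤ -(2*x) := by
      rw [← hkey2]
      exact mul_le_mul_of_nonneg_left htb (le_of_lt hE)
    have h2 : Real.exp ((1-a)*w) ≤ (-x)*((1+a)/a) := by
      have hc : (0:ℝ) < 2*a/(1+a) := by positivity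
      rw [← le_div_iff₀ hc] at h1
      have : -(2*x)/(2*a/(1+a)) = (-x)*((1+a)/a) := by field_simp
      linarith
    have h3 := Real.log_le_log hE h2
    rwa [Real.log_exp] at h3

/-- Behaviour of `ψ₋₁(a,x)` as `x → 0⁻`:
`ψ₋₁(a,x) − log(−2x)/(1−a) → 0`, together with a lower bound on the branch. -/
theorem stmt_17 (a : ℝ) (ha0 : 0 < a) (ha1 : a < 1) (psi1 : ℝ → ℝ)
    (hpsi1 : ∀ x, La a ≤ x → x < 0 → psi1 x ≤ Ma a ∧ fab a (psi1 x) = x) :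
    Filter.Tendsto (fun x => psi1 x - Real.log (-2 * x) / (1 - a))
      (nhdsWithin 0 (Set.Ico (La a) 0)) (nhds 0) ∧
    ∀ x : ℝ, La a ≤ x → x < 0 →
      Real.log (-2 * x) / (1 - a) - Real.log (1 - (-2 * x) ^ (2 * a / (1 - a)))
        ≤ psi1 x := by
  have h1a : (0:ℝ) < 1 - a := by linarith
  have hpa : (0:ℝ) < 1 + a := by linarith
  constructor
  · -- the limit
    set l := nhdsWithin (0:ℝ) (Set.Ico (La a) 0) with hl
    have hT : Tendsto (fun x : ℝ =>
        -(Real.log (1 - Real.exp (Real.log ((-x)*((1+a)/a)) * (2*a/(1-a)))) / (1-a)))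
        l (nhds 0) := by
      have t1 : Tendsto (fun x : ℝ => (-x)*((1+a)/a)) l (nhdsWithin 0 (Set.Ioi 0)) := by
        rw [tendsto_nhdsWithin_iff]
        constructor
        · have c1 : Tendsto (fun x : ℝ => (-x)*((1+a)/a)) (nhds 0) (nhds 0) := by
            have hc : Continuous (fun x : ℝ => (-x)*((1+a)/a)) := by continuity
            have := hc.tendsto (0:ℝ)
            simpa using this
          exact c1.mono_left nhdsWithin_le_nhds
        · filter_upwards [self_mem_nhdsWithin] with x hx
          have hx' : (0:ℝ) < -x := by linarith [hx.2]
          exact mul_pos hx' (by positivity)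
      have t2 : Tendsto (fun x : ℝ => Real.log ((-x)*((1+a)/a))) l atBot :=
        Real.tendsto_log_nhdsGT_zero.comp t1
      have t3 : Tendsto (fun x : ℝ => Real.log ((-x)*((1+a)/a)) * (2*a/(1-a))) l atBot :=
        t2.atBot_mul_const (by positivity)
      have t4 : Tendsto (fun x : ℝ =>
          Real.exp (Real.log ((-x)*((1+a)/a)) * (2*a/(1-a)))) l (nhds 0) :=
        Real.tendsto_exp_atBot.comp t3
      have t5 : Tendsto (fun x : ℝ =>
          1 - Real.exp (Real.log ((-x)*((1+a)/a)) * (2*a/(1-a)))) l (nhds 1) := by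
        simpa using (tendsto_const_nhds.sub t4)
      have t6 : Tendsto (fun x : ℝ =>
          Real.log (1 - Real.exp (Real.log ((-x)*((1+a)/a)) * (2*a/(1-a))))) l (nhds 0) := by
        have := (Real.continuousAt_log one_ne_zero).tendsto.comp t5
        simpa [Function.comp_def] using this
      have t7 := (t6.div_const (1-a)).neg
      simpa using t7
    apply tendsto_of_tendsto_of_tendsto_of_le_of_le'
      (tendsto_const_nhds : Tendsto (fun _ : ℝ => (0:ℝ)) l (nhds 0)) hT
    · -- 0 ≤ g eventually
      filter_upwards [self_mem_nhdsWithin] with x hx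
      obtain ⟨hw, hfw⟩ := hpsi1 x hx.1 hx.2
      obtain ⟨ht, heq, _⟩ := aux_main a ha0 ha1 (psi1 x) x hw hfw hx.2
      have hlt : Real.log (1 - Real.exp (2*a*(psi1 x))) ≤ 0 :=
        Real.log_nonpos (le_of_lt ht) (by linarith [Real.exp_pos (2*a*(psi1 x))])
      have hnn : Real.log (1 - Real.exp (2*a*(psi1 x))) / (1-a) ≤ 0 :=
        div_nonpos_iff.mpr (Or.inr ⟨hlt, h1a.le⟩)
      show (0:ℝ) ≤ psi1 x - Real.log (-2*x) / (1-a)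
      linarith [heq, hnn]
    · -- g ≤ h eventually
      have hsmall : ∀ᶠ x in l, -(a/(1+a)) < x :=
        eventually_nhdsWithin_of_eventually_nhds (eventually_gt_nhds (neg_lt_zero.mpr (div_pos ha0 hpa)))
      filter_upwards [self_mem_nhdsWithin, hsmall] with x hx hxs
      obtain ⟨hw, hfw⟩ := hpsi1 x hx.1 hx.2
      obtain ⟨ht, heq, hub⟩ := aux_main a ha0 ha1 (psi1 x) x hw hfw hx.2
      have hxneg : (0:ℝ) < -x := by linarith [hx.2]
      have hxa : -x < a/(1+a) := by linarith
      have hk1 : (-x)*((1+a)/a) < 1 := by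
        calc (-x)*((1+a)/a) < (a/(1+a))*((1+a)/a) :=
              mul_lt_mul_of_pos_right hxa (by positivity)
          _ = 1 := by field_simp
      have hkpos : 0 < (-x)*((1+a)/a) := mul_pos hxneg (by positivity)
      have hlneg : Real.log ((-x)*((1+a)/a)) < 0 := Real.log_neg hkpos hk1
      have hLneg : Real.log ((-x)*((1+a)/a)) * (2*a/(1-a)) < 0 :=
        mul_neg_of_neg_of_pos hlneg (by positivity)
      have hE1 : Real.exp (Real.log ((-x)*((1+a)/a)) * (2*a/(1-a))) < 1 :=
        Real.exp_lt_one_iff.mpr hLneg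
      have h2aw : 2*a*(psi1 x) ≤ Real.log ((-x)*((1+a)/a)) * (2*a/(1-a)) := by
        have hc : (0:ℝ) < 2*a/(1-a) := by positivity
        have hmul := mul_le_mul_of_nonneg_right hub (le_of_lt hc)
        have hid : (1-a)*(psi1 x)*(2*a/(1-a)) = 2*a*(psi1 x) := by field_simp
        rw [hid] at hmul
        linarith
      have hEle : Real.exp (2*a*(psi1 x)) ≤
          Real.exp (Real.log ((-x)*((1+a)/a)) * (2*a/(1-a))) :=
        Real.exp_le_exp.mpr h2aw
      have hpos' : 0 < 1 - Real.exp (Real.log ((-x)*((1+a)/a)) * (2*a/(1-a))) := by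
        linarith
      have hloge : Real.log (1 - Real.exp (Real.log ((-x)*((1+a)/a)) * (2*a/(1-a)))) ≤
          Real.log (1 - Real.exp (2*a*(psi1 x))) :=
        Real.log_le_log hpos' (by linarith)
      have hdiv : Real.log (1 - Real.exp (Real.log ((-x)*((1+a)/a)) * (2*a/(1-a)))) / (1-a) ≤
          Real.log (1 - Real.exp (2*a*(psi1 x))) / (1-a) :=
        div_le_div_of_nonneg_right hloge h1a.le
      show psi1 x - Real.log (-2*x) / (1-a) ≤
        -(Real.log (1 - Real.exp (Real.log ((-x)*((1+a)/a)) * (2*a/(1-a)))) / (1-a))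
      linarith [heq, hdiv]
  · -- the lower bound
    intro x hxl hx0
    obtain ⟨hw, hfw⟩ := hpsi1 x hxl hx0
    obtain ⟨ht, heq, _⟩ := aux_main a ha0 ha1 (psi1 x) x hw hfw hx0
    have h2x : (0:ℝ) < -2*x := by linarith
    have hlogt : Real.log (1 - Real.exp (2*a*(psi1 x))) ≤ 0 :=
      Real.log_nonpos (le_of_lt ht) (by linarith [Real.exp_pos (2*a*(psi1 x))])
    have h5 : Real.log (-2*x) ≤ (1-a)*(psi1 x) := by
      have hnn : Real.log (1 - Real.exp (2*a*(psi1 x))) / (1-a) ≤ 0 :=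
        div_nonpos_iff.mpr (Or.inr ⟨hlogt, h1a.le⟩)
      have h4 : Real.log (-2*x)/(1-a) ≤ psi1 x := by linarith [heq]
      rw [div_le_iff₀ h1a] at h4
      linarith
    have hEdef : (-2*x) ^ (2*a/(1-a)) = Real.exp (Real.log (-2*x) * (2*a/(1-a))) :=
      Real.rpow_def_of_pos h2x _
    have h6 : Real.log (-2*x) * (2*a/(1-a)) ≤ 2*a*(psi1 x) := by
      have hc : (0:ℝ) < 2*a/(1-a) := by positivity
      have hmul := mul_le_mul_of_nonneg_right h5 (le_of_lt hc)
      have hid : (1-a)*(psi1 x)*(2*a/(1-a)) = 2*a*(psi1 x) := by field_simp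
      rw [hid] at hmul
      linarith
    have hEle : (-2*x) ^ (2*a/(1-a)) ≤ Real.exp (2*a*(psi1 x)) := by
      rw [hEdef]; exact Real.exp_le_exp.mpr h6
    have h9 : Real.log (1 - Real.exp (2*a*(psi1 x))) ≤
        Real.log (1 - (-2*x) ^ (2*a/(1-a))) :=
      Real.log_le_log ht (by linarith)
    have h10 : Real.log (1 - Real.exp (2*a*(psi1 x))) / (1-a) ≤
        Real.log (1 - Real.exp (2*a*(psi1 x))) := by
      rw [div_le_iff₀ h1a]
      nlinarith [hlogt]
    show Real.log (-2*x) / (1-a) - Real.log (1 - (-2*x) ^ (2*a/(1-a))) ≤ psi1 x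
    linarith [heq, h9, h10]
end
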